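/- arXiv:1002.0519 — 9 statements merged into one kernel-verified Lean document; each statement's English description precedes it below -/
import Mathlib

section
/- Let Γ be a full-rank lattice in a finite-dimensional real inner product space E, let x ∈ E, and let R be a surjective linear isometry of E. Then R is a coincidence isometry of the shifted lattice x+Γ if and only if R is a coincidence isometry of Γ and Rx − x ∈ Γ + RΓ (i.e., Rx − x = t + Rs for some t, s ∈ Γ). -/
open Pointwise

variable {E : Type*} [NormedAddCommGroup E] [InnerProductSpace ℝ E] [FiniteDimensional ℝ E]

/-- The image `RΓ` of an additive subgroup `Γ` under a surjective linear isometry `R`. -/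
noncomputable def latMap (R : E ≃ₗᵢ[ℝ] E) (Γ : AddSubgroup E) : AddSubgroup E :=
  Γ.map R.toLinearEquiv.toLinearMap.toAddMonoidHom

/-- `R` is a coincidence isometry of `Γ`: the ordinary CSL `Γ ∩ RΓ` has finite index in `Γ`. -/
noncomputable def IsCoincidenceIsometry (R : E ≃ₗᵢ[ℝ] E) (Γ : AddSubgroup E) : Prop :=
  (Γ ⊓ latMap R Γ).relIndex Γ ≠ 0

/-- `R` is a coincidence isometry of the shifted lattice `x + Γ`: the intersection
`(x+Γ) ∩ R(x+Γ)` is a coset `c + Λ` of some finite-index additive subgroup `Λ` of `Γ`,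
with `c ∈ x + Γ`. -/
noncomputable def IsShiftedCoincidenceIsometry (R : E ≃ₗᵢ[ℝ] E) (x : E) (Γ : AddSubgroup E) : Prop :=
  ∃ c ∈ x +ᵥ (Γ : Set E), ∃ Λ : AddSubgroup E, Λ ≤ Γ ∧ Λ.relIndex Γ ≠ 0 ∧
    (x +ᵥ (Γ : Set E)) ∩ (⇑R '' (x +ᵥ (Γ : Set E))) = c +ᵥ (Λ : Set E)


set_option linter.unusedSectionVars false

lemma mem_latMap {R : E ≃ₗᵢ[ℝ] E} {Γ : AddSubgroup E} {y : E} :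
    y ∈ latMap R Γ ↔ ∃ g ∈ Γ, R g = y := by
  simp [latMap, AddSubgroup.mem_map]

lemma inter_coset (Γ : AddSubgroup E) (R : E ≃ₗᵢ[ℝ] E) (x c : E)
    (hc1 : c ∈ x +ᵥ (Γ : Set E)) (hc2 : c ∈ ⇑R '' (x +ᵥ (Γ : Set E))) :
    (x +ᵥ (Γ : Set E)) ∩ (⇑R '' (x +ᵥ (Γ : Set E))) =
      c +ᵥ ((Γ ⊓ latMap R Γ : AddSubgroup E) : Set E) := by
  obtain ⟨g0, hg0, hcg0⟩ := hc1
  obtain ⟨-, ⟨h0, hh0, rfl⟩, hch0⟩ := hc2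
  simp only [vadd_eq_add] at hcg0 hch0
  ext y
  simp only [Set.mem_inter_iff, Set.mem_vadd_set, Set.mem_image, SetLike.mem_coe,
    AddSubgroup.mem_inf, vadd_eq_add, mem_latMap]
  constructor
  · rintro ⟨⟨g, hg, rfl⟩, z, ⟨h, hh, rfl⟩, hy⟩
    refine ⟨(x + g) - c, ⟨?_, h - h0, sub_mem hh hh0, ?_⟩, by abel⟩
    · have : (x + g) - c = g - g0 := by rw [← hcg0]; abel
      rw [this]; exact sub_mem hg hg0
    · rw [map_add] at hy hch0
      rw [map_sub, ← hch0, ← hy]; abel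
  · rintro ⟨m, ⟨hm1, k, hk, hkm⟩, rfl⟩
    refine ⟨⟨g0 + m, add_mem hg0 hm1, by rw [← hcg0]; abel⟩,
      x + (h0 + k), ⟨h0 + k, add_mem hh0 hk, rfl⟩, ?_⟩
    rw [map_add, map_add, ← hch0, hkm, map_add]; abel

theorem shifted_coincidence_iff (Γ : AddSubgroup E) (hdisc : DiscreteTopology Γ)
    (hspan : Submodule.span ℝ (Γ : Set E) = ⊤) (x : E) (R : E ≃ₗᵢ[ℝ] E) :
    IsShiftedCoincidenceIsometry R x Γ ↔
      (IsCoincidenceIsometry R Γ ∧ ∃ t ∈ Γ, ∃ s ∈ Γ, R x - x = t + R s) := by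
  constructor
  · rintro ⟨c, hc, Λ, hΛΓ, hrel, heq⟩
    have hcmem : c ∈ (x +ᵥ (Γ : Set E)) ∩ (⇑R '' (x +ᵥ (Γ : Set E))) := by
      rw [heq]
      exact ⟨0, Λ.zero_mem, by simp⟩
    have hc2 : c ∈ ⇑R '' (x +ᵥ (Γ : Set E)) := hcmem.2
    have hcoset := inter_coset Γ R x c hc hc2
    have key : ∀ (S : Set E) (y : E), c + y ∈ c +ᵥ S ↔ y ∈ S := by
      intro S y
      constructor
      · rintro ⟨b, hb, hbe⟩
        simp only [vadd_eq_add] at hbe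
        rwa [← add_left_cancel hbe]
      · intro h; exact ⟨y, h, rfl⟩
    have hΛeq : Λ = Γ ⊓ latMap R Γ := by
      apply SetLike.coe_injective
      have h2 : c +ᵥ (Λ : Set E) = c +ᵥ ((Γ ⊓ latMap R Γ : AddSubgroup E) : Set E) := by
        rw [← heq, hcoset]
      ext y
      rw [← key ((Λ : Set E)) y, ← key (((Γ ⊓ latMap R Γ : AddSubgroup E) : Set E)) y, h2]
    refine ⟨by rw [IsCoincidenceIsometry, ← hΛeq]; exact hrel, ?_⟩
    obtain ⟨t, ht, hct⟩ := hc
    obtain ⟨-, ⟨h, hh, rfl⟩, hch⟩ := hc2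
    simp only [vadd_eq_add] at hct hch
    refine ⟨t, ht, -h, neg_mem hh, ?_⟩
    rw [map_add] at hch
    rw [← hct] at hch
    rw [map_neg]
    have hRx : R x = x + t - R h := by rw [← hch]; abel
    rw [hRx]; abel
  · rintro ⟨hco, t, ht, s, hs, hts⟩
    refine ⟨x + t, ⟨t, ht, rfl⟩, Γ ⊓ latMap R Γ, inf_le_left, hco, ?_⟩
    have hc2 : x + t ∈ ⇑R '' (x +ᵥ (Γ : Set E)) := by
      refine ⟨x + (-s), ⟨-s, neg_mem hs, rfl⟩, ?_⟩
      rw [map_add, map_neg]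
      have : R x = x + (t + R s) := by rw [← hts]; abel
      rw [this]
      abel
    exact inter_coset Γ R x (x + t) ⟨t, ht, rfl⟩ hc2
end

section
/- Let Γ be a full-rank lattice in a finite-dimensional real inner product space E, let x ∈ E, and let R be a coincidence isometry of the shifted lattice x+Γ. If t, s ∈ Γ satisfy Rx − x = t + Rs, then (x+Γ) ∩ R(x+Γ) = x + t + (Γ ∩ RΓ) (equality of subsets of E). -/
open Pointwise

variable {E : Type*} [NormedAddCommGroup E] [InnerProductSpace ℝ E] [FiniteDimensional ℝ E]

lemma mem_latMap_iff (R : E ≃ₗᵢ[ℝ] E) (Γ : AddSubgroup E) (v : E) :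
    v ∈ latMap R Γ ↔ ∃ y ∈ Γ, R y = v := by
  simp [latMap]

theorem shifted_CSL_eq_coset (Γ : AddSubgroup E) (hdisc : DiscreteTopology Γ)
    (hspan : Submodule.span ℝ (Γ : Set E) = ⊤) (x : E) (R : E ≃ₗᵢ[ℝ] E)
    (hR : IsShiftedCoincidenceIsometry R x Γ) (t s : E) (ht : t ∈ Γ) (hs : s ∈ Γ)
    (hts : R x - x = t + R s) :
    (x +ᵥ (Γ : Set E)) ∩ (⇑R '' (x +ᵥ (Γ : Set E))) =
      (x + t) +ᵥ ((Γ ⊓ latMap R Γ : AddSubgroup E) : Set E) := by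
  have hRx : R x = t + R s + x := sub_eq_iff_eq_add.mp hts
  ext v
  simp only [Set.mem_inter_iff, Set.mem_vadd_set, Set.mem_image, SetLike.mem_coe,
    AddSubgroup.mem_inf, mem_latMap_iff, vadd_eq_add]
  constructor
  · rintro ⟨⟨γ₁, hγ₁, rfl⟩, w, ⟨γ₂, hγ₂, rfl⟩, hw⟩
    have hw' : x + γ₁ = t + R s + x + R γ₂ := by rw [← hw, map_add, hRx]
    refine ⟨γ₁ - t, ⟨sub_mem hγ₁ ht, s + γ₂, add_mem hs hγ₂, ?_⟩, by abel⟩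
    rw [map_add]
    have h2 : t + R s + x + R γ₂ - x - t = γ₁ - t := by rw [← hw']; abel
    rw [← h2]; abel
  · rintro ⟨w, ⟨hwΓ, y, hy, hyw⟩, rfl⟩
    refine ⟨⟨t + w, add_mem ht hwΓ, by abel⟩,
      x + (y - s), ⟨y - s, sub_mem hy hs, rfl⟩, ?_⟩
    rw [map_add, map_sub, hRx, hyw]
    abel
end

section
/- Let Γ be a full-rank lattice in a finite-dimensional real inner product space E, let x ∈ E, and let R ∈ OC(x+Γ). Then there exists t ∈ Γ such that (x+Γ) ∩ R(x+Γ) = x + t + (Γ ∩ RΓ); in particular the coincidence site lattice of the shifted lattice x+Γ is a coset of the ordinary coincidence site lattice Γ(R) = Γ ∩ RΓ, which has finite index in Γ (so shifting the lattice produces no new coincidence indices). -/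
open Pointwise

variable {E : Type*} [NormedAddCommGroup E] [InnerProductSpace ℝ E] [FiniteDimensional ℝ E]

theorem shifted_CSL_is_coset_of_CSL (Γ : AddSubgroup E) (hdisc : DiscreteTopology Γ)
    (hspan : Submodule.span ℝ (Γ : Set E) = ⊤) (x : E) (R : E ≃ₗᵢ[ℝ] E)
    (hR : IsShiftedCoincidenceIsometry R x Γ) :
    (∃ t ∈ Γ, (x +ᵥ (Γ : Set E)) ∩ (⇑R '' (x +ᵥ (Γ : Set E))) =
        (x + t) +ᵥ ((Γ ⊓ latMap R Γ : AddSubgroup E) : Set E)) ∧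
      (Γ ⊓ latMap R Γ).relIndex Γ ≠ 0 := by
  obtain ⟨c, hc, Λ, hΛΓ, hrel, heq⟩ := hR
  obtain ⟨t, htΓ, htc⟩ := hc
  -- c belongs to the intersection
  have hcS : c ∈ (x +ᵥ (Γ : Set E)) ∩ (⇑R '' (x +ᵥ (Γ : Set E))) := by
    rw [heq]
    exact ⟨0, Λ.zero_mem, by simp [vadd_eq_add]⟩
  obtain ⟨-, w, ⟨δ, hδΓ, hδw⟩, hwc⟩ := hcS
  -- hwc : R w = c, hδw : x +ᵥ δ = w
  have hcR : R (x + δ) = c := by rw [← hwc, ← hδw]; rfl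
  have key : (Γ ⊓ latMap R Γ : AddSubgroup E) = Λ := by
    apply SetLike.ext
    intro g
    constructor
    · rintro ⟨hgΓ, hgR⟩
      obtain ⟨δ', hδ'Γ, hδ'g⟩ := hgR
      have hmem : c + g ∈ c +ᵥ (Λ : Set E) := by
        rw [← heq]
        constructor
        · exact ⟨t + g, Γ.add_mem htΓ hgΓ, by
            simp only [vadd_eq_add] at htc ⊢
            rw [← htc]; abel⟩
        · refine ⟨x + (δ + δ'), ⟨δ + δ', Γ.add_mem hδΓ hδ'Γ, rfl⟩, ?_⟩
          have : R (x + (δ + δ')) = R (x + δ) + R δ' := by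
            rw [← map_add, add_assoc]
          rw [this, hcR]
          have : R δ' = g := hδ'g
          rw [this]
      obtain ⟨l, hl, hlc⟩ := hmem
      simp only [vadd_eq_add] at hlc
      have : l = g := add_left_cancel hlc
      rwa [← this]
    · intro hg
      have hmem : c + g ∈ (x +ᵥ (Γ : Set E)) ∩ (⇑R '' (x +ᵥ (Γ : Set E))) := by
        rw [heq]
        exact ⟨g, hg, rfl⟩
      obtain ⟨⟨γ', hγ', hγ'c⟩, w', ⟨δ', hδ'Γ, hδ'w⟩, hwc'⟩ := hmem
      simp only [vadd_eq_add] at hγ'c hδ'w htc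
      constructor
      · -- g = γ' - t
        have h1 : x + γ' = x + (t + g) := by
          rw [hγ'c, ← htc]; abel
        have h2 : γ' = t + g := add_left_cancel h1
        have : g = γ' - t := by rw [h2]; abel
        rw [this]; exact Γ.sub_mem hγ' htΓ
      · -- g = R δ' - R (x+δ) + ... : c + g = R (x + δ'), c = R (x + δ)
        refine ⟨δ' - δ, Γ.sub_mem hδ'Γ hδΓ, ?_⟩
        have h1 : R (x + δ') = c + g := by rw [← hwc', ← hδ'w]
        have : R (δ' - δ) = R (x + δ') - R (x + δ) := by
          rw [← map_sub]
          congr 1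
          abel
        simp only [LinearMap.toAddMonoidHom_coe]
        calc (R.toLinearEquiv.toLinearMap) (δ' - δ)
            = R (δ' - δ) := rfl
          _ = R (x + δ') - R (x + δ) := this
          _ = (c + g) - c := by rw [h1, hcR]
          _ = g := by abel
  constructor
  · refine ⟨t, htΓ, ?_⟩
    rw [key, heq]
    congr 1
    simpa [vadd_eq_add] using htc.symm
  · rw [key]; exact hrel
end

section
/- Let z be a nonzero Gaussian integer such that z and conj(z) are coprime in ℤ[i], and let ε ∈ {1, −1, i, −i}. Then, as subsets of ℂ, ℤ[i] + ε·(z/conj(z))·ℤ[i] = (1/conj(z))·ℤ[i]. -/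
open Pointwise Complex ComplexConjugate

/-- The square lattice `Γ = ℤ[i]`, i.e. the Gaussian integers viewed as an additive
subgroup of `ℂ`. -/
noncomputable def Zi : AddSubgroup ℂ :=
  AddMonoidHom.range (GaussianInt.toComplex.toAddMonoidHom)

/-- `f` is (the underlying map of) a surjective real-linear isometry of `ℂ`. -/
def IsLinIso (f : ℂ → ℂ) : Prop := ∃ R : ℂ ≃ₗᵢ[ℝ] ℂ, ⇑R = f

/-- `f` is a rotation of `ℂ`, i.e. multiplication by a complex number of modulus 1. -/
def IsRotation (f : ℂ → ℂ) : Prop := ∃ u : ℂ, ‖u‖ = 1 ∧ ∀ w, f w = u * w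

/-- `f` is a reflection of `ℂ`, i.e. `w ↦ u * conj w` for a complex number `u` of
modulus 1. -/
def IsReflection (f : ℂ → ℂ) : Prop := ∃ u : ℂ, ‖u‖ = 1 ∧ ∀ w, f w = u * conj w

/-- The shifted square lattice `x + Γ` as a subset of `ℂ`. -/
noncomputable def shiftedZi (x : ℂ) : Set ℂ := x +ᵥ (Zi : Set ℂ)

/-- `OC (x+Γ)`: the set of (maps of) surjective real-linear isometries `f` of `ℂ` such
that `(x+Γ) ∩ f(x+Γ)` is a coset `c + Λ`, with `c ∈ x+Γ` and `Λ` a finite-index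
additive subgroup of `Γ = ℤ[i]`. -/
noncomputable def OCs (x : ℂ) : Set (ℂ → ℂ) :=
  {f | IsLinIso f ∧ ∃ c ∈ shiftedZi x, ∃ Λ : AddSubgroup ℂ, Λ ≤ Zi ∧
    Λ.relIndex Zi ≠ 0 ∧ shiftedZi x ∩ (f '' shiftedZi x) = c +ᵥ (Λ : Set ℂ)}

/-- `SOC (x+Γ)`: the rotations among the coincidence isometries of `x + Γ`. -/
noncomputable def SOCs (x : ℂ) : Set (ℂ → ℂ) := {f ∈ OCs x | IsRotation f}

theorem sum_lattice_rotated_lattice (z : GaussianInt) (hz : z ≠ 0)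
    (hcop : IsCoprime z (star z)) (ε : ℂ) (hε : ε ∈ ({1, -1, I, -I} : Set ℂ)) :
    (Zi : Set ℂ) + (ε * ((z : ℂ) / conj (z : ℂ))) • (Zi : Set ℂ) =
      (1 / conj (z : ℂ)) • (Zi : Set ℂ) := by
  obtain ⟨u, v, huv, hu⟩ : ∃ u v : GaussianInt, u * v = 1 ∧ (u : ℂ) = ε := by
    simp only [Set.mem_insert_iff, Set.mem_singleton_iff] at hε
    rcases hε with h | h | h | h <;> subst h
    · exact ⟨1, 1, by decide, by simp⟩
    · exact ⟨-1, -1, by decide, by simp⟩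
    · exact ⟨⟨0,1⟩, ⟨0,-1⟩, by decide, by simp [GaussianInt.toComplex_def']⟩
    · exact ⟨⟨0,-1⟩, ⟨0,1⟩, by decide, by simp [GaussianInt.toComplex_def']⟩
  have hzc : (z : ℂ) ≠ 0 := by
    rw [Ne, GaussianInt.toComplex_eq_zero]; exact hz
  have hcz : conj (z : ℂ) ≠ 0 := by
    intro h
    apply hzc
    have := congrArg (starRingEnd ℂ) h
    simpa using this
  have huv' : (u : ℂ) * (v : ℂ) = 1 := by
    rw [← GaussianInt.toComplex_mul, huv, GaussianInt.toComplex_one]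
  apply Set.Subset.antisymm
  · intro w hw
    rcases Set.mem_add.mp hw with ⟨x, hx, y, hy, rfl⟩
    rcases hx with ⟨g, rfl⟩
    rcases Set.mem_smul_set.mp hy with ⟨y0, ⟨h, rfl⟩, rfl⟩
    refine Set.mem_smul_set.mpr ⟨((star z * g + u * z * h : GaussianInt) : ℂ), ⟨_, rfl⟩, ?_⟩
    simp only [GaussianInt.toComplex_add, GaussianInt.toComplex_mul,
      GaussianInt.toComplex_star, hu, smul_eq_mul,
      RingHom.toAddMonoidHom_eq_coe, AddMonoidHom.coe_coe]
    field_simp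
  · intro w hw
    rcases Set.mem_smul_set.mp hw with ⟨x, ⟨g, rfl⟩, rfl⟩
    obtain ⟨a, b, hab⟩ := hcop
    have key : (a : ℂ) * (z : ℂ) + (b : ℂ) * conj (z : ℂ) = 1 := by
      have := congrArg (GaussianInt.toComplex) hab
      simpa only [GaussianInt.toComplex_add, GaussianInt.toComplex_mul,
        GaussianInt.toComplex_star, GaussianInt.toComplex_one] using this
    refine Set.mem_add.mpr ⟨((b * g : GaussianInt) : ℂ), ⟨_, rfl⟩,
      (ε * ((z : ℂ) / conj (z : ℂ))) • ((v * a * g : GaussianInt) : ℂ),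
      Set.mem_smul_set.mpr ⟨_, ⟨_, rfl⟩, rfl⟩, ?_⟩
    simp only [GaussianInt.toComplex_mul, smul_eq_mul, ← hu]
    field_simp
    ring_nf
    linear_combination ((g : ℂ) * (z : ℂ) * (a : ℂ)) * huv' + (g : ℂ) * key
end

section
/- Let x ∈ ℂ, let z ∈ ℤ[i] be such that z and conj(z) are coprime in ℤ[i], and let ε ∈ {1, −1, i, −i}. The rotation R(z,ε): w ↦ ε·(z/conj(z))·w belongs to SOC(x+Γ) if and only if (εz − conj(z))·x ∈ ℤ[i]. -/
open Pointwise Complex ComplexConjugate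

/- ### Auxiliary material -/

/-- The Gaussian integers as an additive group are just `ℤ × ℤ`. -/
def gaussianIntAddEquiv : GaussianInt ≃+ ℤ × ℤ where
  toFun z := (z.re, z.im)
  invFun p := ⟨p.1, p.2⟩
  left_inv _ := rfl
  right_inv _ := rfl
  map_add' _ _ := rfl

instance : Module.Free ℤ GaussianInt :=
  Module.Free.of_equiv (gaussianIntAddEquiv.toIntLinearEquiv).symm

instance : Module.Finite ℤ GaussianInt :=
  Module.Finite.equiv (gaussianIntAddEquiv.toIntLinearEquiv).symm

lemma mem_Zi_iff {w : ℂ} : w ∈ Zi ↔ ∃ g : GaussianInt, (g : ℂ) = w := Iff.rfl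

lemma mem_shiftedZi {x w : ℂ} : w ∈ shiftedZi x ↔ ∃ g : GaussianInt, w = x + (g : ℂ) := by
  constructor
  · rintro ⟨b, ⟨g, rfl⟩, rfl⟩
    exact ⟨g, rfl⟩
  · rintro ⟨g, rfl⟩
    exact ⟨(g : ℂ), ⟨g, rfl⟩, rfl⟩

theorem rotation_mem_SOC_iff (x : ℂ) (z : GaussianInt) (hcop : IsCoprime z (star z))
    (ε : ℂ) (hε : ε ∈ ({1, -1, I, -I} : Set ℂ)) :
    (fun w => ε * ((z : ℂ) / conj (z : ℂ)) * w) ∈ SOCs x ↔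
      (ε * (z : ℂ) - conj (z : ℂ)) * x ∈ Zi := by
  have hz : z ≠ 0 := by
    rintro rfl
    simp only [star_zero] at hcop
    exact not_isCoprime_zero_zero hcop
  have hzC : (z : ℂ) ≠ 0 := by
    simpa [GaussianInt.toComplex_eq_zero] using hz
  have hzbC : conj (z : ℂ) ≠ 0 := by
    simpa using hzC
  have hstar : ((star z : GaussianInt) : ℂ) = conj (z : ℂ) := GaussianInt.toComplex_star z
  obtain ⟨η, η', hηη', hη⟩ : ∃ η η' : GaussianInt, η * η' = 1 ∧ ((η : GaussianInt) : ℂ) = ε := by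
    simp only [Set.mem_insert_iff, Set.mem_singleton_iff] at hε
    rcases hε with rfl | rfl | rfl | rfl
    · exact ⟨1, 1, one_mul 1, by simp⟩
    · exact ⟨-1, -1, by ring, by simp⟩
    · exact ⟨⟨0, 1⟩, ⟨0, -1⟩, by decide, by rw [GaussianInt.toComplex_def']; push_cast; ring⟩
    · exact ⟨⟨0, -1⟩, ⟨0, 1⟩, by decide, by rw [GaussianInt.toComplex_def']; push_cast; ring⟩
  have h1C : ((η : GaussianInt) : ℂ) * ((η' : GaussianInt) : ℂ) = 1 := by
    rw [← GaussianInt.toComplex_mul, hηη', GaussianInt.toComplex_one]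
  have hε1 : ‖ε‖ = 1 := by
    simp only [Set.mem_insert_iff, Set.mem_singleton_iff] at hε
    rcases hε with rfl | rfl | rfl | rfl <;> simp
  have hclear : ∀ p q : ℂ, (ε * ((z : ℂ) / conj (z : ℂ)) * p = q) ↔
      (ε * (z : ℂ) * p = conj (z : ℂ) * q) := by
    intro p q
    rw [← mul_div_assoc, div_mul_eq_mul_div, div_eq_iff hzbC, mul_comm q]
  constructor
  · -- membership → arithmetic condition
    rintro ⟨⟨-, c, hc, Λ, -, -, hset⟩, -⟩
    have hcmem : c ∈ shiftedZi x ∩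
        ((fun w => ε * ((z : ℂ) / conj (z : ℂ)) * w) '' shiftedZi x) := by
      rw [hset]
      exact ⟨0, Λ.zero_mem, by simp⟩
    obtain ⟨hc1, w0, hw0, hcw⟩ := hcmem
    obtain ⟨g, hg⟩ := mem_shiftedZi.mp hc1
    obtain ⟨h, rfl⟩ := mem_shiftedZi.mp hw0
    dsimp only at hcw
    rw [hg] at hcw
    -- hcw : ε * (z/conj z) * (x + h) = x + g
    have hcw' : ε * (z : ℂ) * (x + (h : ℂ)) = conj (z : ℂ) * (x + (g : ℂ)) :=
      (hclear _ _).mp hcw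
    refine ⟨star z * g - η * z * h, ?_⟩
    simp only [RingHom.toAddMonoidHom_eq_coe, AddMonoidHom.coe_coe, map_sub, map_mul, hstar, hη]
    linear_combination -hcw'
  · -- arithmetic condition → membership
    rintro ⟨g, hg⟩
    -- hg : (g : ℂ) = (ε * z - conj z) * x
    obtain ⟨u, v, huv⟩ := hcop
    have h2C : ((u : GaussianInt) : ℂ) * (z : ℂ) + ((v : GaussianInt) : ℂ) * conj (z : ℂ) = 1 := by
      rw [← hstar, ← GaussianInt.toComplex_mul, ← GaussianInt.toComplex_mul,
        ← GaussianInt.toComplex_add, huv, GaussianInt.toComplex_one]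
    -- the coset representative and the lattice
    set a : GaussianInt := v * g with ha
    set b : GaussianInt := -(η' * (u * g)) with hb
    set c : ℂ := x + ((a : GaussianInt) : ℂ) with hcdef
    have hA' : ε * (z : ℂ) * (x + ((b : GaussianInt) : ℂ)) = conj (z : ℂ) * (x + ((a : GaussianInt) : ℂ)) := by
      simp only [ha, hb, map_neg, map_mul]
      linear_combination (-(z:ℂ) * (u:ℂ) * (g:ℂ)) * h1C +
        ((η':ℂ) * (z:ℂ) * (u:ℂ) * (g:ℂ)) * hη + (-(g:ℂ)) * h2C - hg
    have hA : ε * ((z : ℂ) / conj (z : ℂ)) * (x + ((b : GaussianInt) : ℂ)) = c :=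
      (hclear _ _).mpr (by rw [hcdef]; linear_combination hA')
    have hu1 : ‖ε * ((z : ℂ) / conj (z : ℂ))‖ = 1 := by
      rw [norm_mul, hε1, one_mul, norm_div, RCLike.norm_conj, div_self]
      exact norm_ne_zero_iff.mpr hzC
    refine ⟨⟨⟨rotation ⟨ε * ((z : ℂ) / conj (z : ℂ)), ?_⟩, funext fun w => rfl⟩,
      c, mem_shiftedZi.mpr ⟨a, rfl⟩,
      AddSubgroup.map GaussianInt.toComplex.toAddMonoidHom (Ideal.span {z}).toAddSubgroup,
      ?_, ?_, ?_⟩, ⟨ε * ((z : ℂ) / conj (z : ℂ)), hu1, fun w => rfl⟩⟩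
    · -- membership in the circle
      simpa [Submonoid.unitSphere] using hu1
    · -- Λ ≤ Zi
      rintro w ⟨m, -, rfl⟩
      exact ⟨m, rfl⟩
    · -- finite relindex
      have hbot : Ideal.span ({z} : Set GaussianInt) ≠ ⊥ := by
        simpa [Ideal.span_singleton_eq_bot] using hz
      haveI : Fintype (GaussianInt ⧸ Ideal.span ({z} : Set GaussianInt)) :=
        haveI := Ideal.finiteQuotientOfFreeOfNeBot _ hbot; Fintype.ofFinite _
      haveI : Finite (GaussianInt ⧸ (Ideal.span ({z} : Set GaussianInt)).toAddSubgroup) :=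
        Finite.of_fintype (GaussianInt ⧸ Ideal.span ({z} : Set GaussianInt))
      have hidx := AddSubgroup.index_comap
        (AddSubgroup.map GaussianInt.toComplex.toAddMonoidHom (Ideal.span ({z} : Set GaussianInt)).toAddSubgroup)
        GaussianInt.toComplex.toAddMonoidHom
      rw [AddSubgroup.comap_map_eq_self_of_injective GaussianInt.toComplex_injective] at hidx
      show AddSubgroup.relIndex _ Zi ≠ 0
      rw [Zi, ← hidx]
      exact AddSubgroup.index_ne_zero_of_finite
    · -- the coset equation
      ext w
      constructor
      · rintro ⟨hw1, w0, hw0, hw2⟩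
        obtain ⟨g1, rfl⟩ := mem_shiftedZi.mp hw1
        obtain ⟨h, rfl⟩ := mem_shiftedZi.mp hw0
        dsimp only at hw2
        have hw2' : ε * (z : ℂ) * (x + (h : ℂ)) = conj (z : ℂ) * (x + (g1 : ℂ)) :=
          (hclear _ _).mp hw2
        have hdvd0 : z ∣ star z * (g1 - a) := by
          refine ⟨η * (h - b), ?_⟩
          rw [← GaussianInt.toComplex_inj]
          simp only [map_mul, map_sub, hstar, hη]
          linear_combination hA' - hw2'
        have hcop' : IsCoprime z (star z) := ⟨u, v, huv⟩
        have hdvd : z ∣ g1 - a := hcop'.dvd_of_dvd_mul_left hdvd0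
        refine Set.mem_vadd_set.mpr
          ⟨((g1 - a : GaussianInt) : ℂ), ⟨g1 - a, Ideal.mem_span_singleton.mpr hdvd, rfl⟩, ?_⟩
        show c + _ = x + (g1 : ℂ)
        rw [hcdef]
        simp only [RingHom.toAddMonoidHom_eq_coe, AddMonoidHom.coe_coe, map_sub, map_mul, ha]
        ring
      · rintro ⟨m, ⟨m0, hm0, rfl⟩, rfl⟩
        obtain ⟨k, rfl⟩ := Ideal.mem_span_singleton.mp hm0
        constructor
        · refine mem_shiftedZi.mpr ⟨a + z * k, ?_⟩
          show c + _ = _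
          rw [hcdef]
          simp only [RingHom.toAddMonoidHom_eq_coe, AddMonoidHom.coe_coe, map_add, map_mul]
          ring
        · refine ⟨x + ((b + η' * (star z * k) : GaussianInt) : ℂ), mem_shiftedZi.mpr ⟨_, rfl⟩, ?_⟩
          show ε * ((z : ℂ) / conj (z : ℂ)) * _ = c + _
          rw [hclear, hcdef]
          simp only [RingHom.toAddMonoidHom_eq_coe, AddMonoidHom.coe_coe, map_add, map_mul,
            hstar]
          linear_combination hA' + ((z:ℂ) * conj (z:ℂ) * (k:ℂ)) * h1C -
            ((z:ℂ) * conj (z:ℂ) * (k:ℂ) * ((η':GaussianInt):ℂ)) * hη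
end

section
/- For every x ∈ ℂ, the set SOC(x+Γ) of coincidence rotations of the shifted square lattice x+Γ is a subgroup of SOC(Γ): SOC(x+Γ) ⊆ SOC(Γ), the identity belongs to SOC(x+Γ), and SOC(x+Γ) is closed under composition and under inverses. -/
open Pointwise Complex ComplexConjugate

namespace SOCaux
open GaussianInt

lemma mem_Zi {w : ℂ} : w ∈ Zi ↔ ∃ g : GaussianInt, (g : ℂ) = w := Iff.rfl

lemma mem_shiftedZi {x y : ℂ} : y ∈ shiftedZi x ↔ ∃ g : GaussianInt, y = x + (g : ℂ) := by
  simp only [shiftedZi, Set.mem_vadd_set, SetLike.mem_coe, mem_Zi]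
  constructor
  · rintro ⟨w, ⟨g, rfl⟩, rfl⟩; exact ⟨g, rfl⟩
  · rintro ⟨g, rfl⟩; exact ⟨(g : ℂ), ⟨g, rfl⟩, rfl⟩

lemma mem_vadd_coset {c y : ℂ} {Λ : AddSubgroup ℂ} :
    y ∈ c +ᵥ (Λ : Set ℂ) ↔ y - c ∈ Λ := by
  simp only [Set.mem_vadd_set, SetLike.mem_coe]
  constructor
  · rintro ⟨w, hw, rfl⟩; simpa using hw
  · intro h; exact ⟨y - c, h, by simp [vadd_eq_add]⟩

/-- the rotation map as a function -/
lemma isLinIso_rotation {u : ℂ} (hu : ‖u‖ = 1) : IsLinIso (fun w => u * w) := by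
  refine ⟨rotation ⟨u, mem_sphere_zero_iff_norm.2 hu⟩, funext fun w => ?_⟩
  rfl

lemma u_ne_zero {u : ℂ} (hu : ‖u‖ = 1) : u ≠ 0 := by
  intro h; rw [h] at hu; simp at hu

end SOCaux

namespace SOCaux
open GaussianInt EuclideanDomain

instance : Infinite Zi := by
  refine Infinite.of_injective (fun n : ℤ => (⟨((n : GaussianInt) : ℂ), ⟨n, rfl⟩⟩ : Zi)) ?_
  intro a b h
  have : ((a : GaussianInt) : ℂ) = ((b : GaussianInt) : ℂ) := congrArg Subtype.val h
  exact_mod_cast toComplex_inj.mp this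

lemma relindex_ne_zero_of (Λ : AddSubgroup ℂ) (n : ℕ) (hn : n ≠ 0)
    (h : ∀ g : GaussianInt, (n : ℂ) * (g : ℂ) ∈ Λ) : Λ.relIndex Zi ≠ 0 := by
  have : NeZero n := ⟨hn⟩
  have hfin : Finite (Zi ⧸ Λ.addSubgroupOf Zi) := by
    apply Finite.of_surjective (f := fun ab : ZMod n × ZMod n =>
      (QuotientAddGroup.mk (⟨((⟨(ab.1.val : ℤ), (ab.2.val : ℤ)⟩ : GaussianInt) : ℂ),
        ⟨_, rfl⟩⟩ : Zi) : Zi ⧸ Λ.addSubgroupOf Zi))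
    intro q
    induction q using QuotientAddGroup.induction_on with
    | H w =>
      obtain ⟨g, hg⟩ := w.2
      refine ⟨((g.re : ZMod n), (g.im : ZMod n)), ?_⟩
      rw [QuotientAddGroup.eq]
      rw [AddSubgroup.mem_addSubgroupOf]
      have hre : (n : ℤ) ∣ (g.re - ((g.re : ZMod n).val : ℤ)) := by
        rw [← ZMod.intCast_zmod_eq_zero_iff_dvd]
        push_cast
        rw [ZMod.natCast_rightInverse.rightInverse ((g.re : ZMod n))]
        ring_nf
      have him : (n : ℤ) ∣ (g.im - ((g.im : ZMod n).val : ℤ)) := by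
        rw [← ZMod.intCast_zmod_eq_zero_iff_dvd]
        push_cast
        rw [ZMod.natCast_rightInverse.rightInverse ((g.im : ZMod n))]
        ring_nf
      obtain ⟨k, hk⟩ := hre
      obtain ⟨l, hl⟩ := him
      show ((-(⟨((⟨(((g.re : ZMod n)).val : ℤ), (((g.im : ZMod n)).val : ℤ)⟩ :
          GaussianInt) : ℂ), ⟨_, rfl⟩⟩ : Zi) + w : Zi) : ℂ) ∈ Λ
      rw [AddSubgroup.coe_add, AddSubgroup.coe_neg]
      have heq : -(((⟨(((g.re : ZMod n)).val : ℤ), (((g.im : ZMod n)).val : ℤ)⟩ :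
          GaussianInt) : ℂ)) + (w : ℂ) = (n : ℂ) * ((⟨k, l⟩ : GaussianInt) : ℂ) := by
        rw [← hg]
        show -(((⟨_, _⟩ : GaussianInt) : ℂ)) + ((g : GaussianInt) : ℂ) = _
        rw [(map_natCast toComplex n).symm, ← toComplex_mul, ← toComplex_neg, ← toComplex_add,
          toComplex_inj, Zsqrtd.ext_iff]
        simp [ZMod.natCast_val] at hk hl ⊢
        omega
      rw [heq]
      exact h _
  have h1 : Λ.relIndex Zi = Nat.card (Zi ⧸ Λ.addSubgroupOf Zi) := rfl
  rw [h1]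
  exact Nat.card_ne_zero.mpr ⟨inferInstance, hfin⟩

lemma mem_SOCs_of {x u : ℂ} (hu : ‖u‖ = 1) (p q : GaussianInt) (hq : q ≠ 0)
    (hpq : u * (q : ℂ) = (p : ℂ)) (a b : GaussianInt)
    (hab : (1 - u) * x = (a : ℂ) + u * (b : ℂ)) :
    (fun w => u * w) ∈ SOCs x := by
  have hqc : (q : ℂ) ≠ 0 := fun h => hq (toComplex_eq_zero.mp h)
  have hpc : (p : ℂ) ≠ 0 := by
    rw [← hpq]; exact mul_ne_zero (u_ne_zero hu) hqc
  have hpnorm0 : p.norm ≠ 0 := by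
    intro h
    have h2 := intCast_complex_norm p
    rw [h] at h2
    exact hpc (Complex.normSq_eq_zero.mp (by exact_mod_cast h2.symm))
  set n : ℕ := p.norm.natAbs with hn
  have hn0 : n ≠ 0 := Int.natAbs_ne_zero.mpr hpnorm0
  have hncast : ((n : ℕ) : ℂ) = Complex.normSq (p : ℂ) := by
    rw [← intCast_complex_norm p, hn]
    rw [show (((Zsqrtd.norm p).natAbs : ℕ) : ℂ) = (((Zsqrtd.norm p).natAbs : ℤ) : ℂ) from
      (Int.cast_natCast _).symm, Int.natAbs_of_nonneg (Zsqrtd.norm_nonneg (by norm_num) p)]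
  set Λ : AddSubgroup ℂ := Zi ⊓ Zi.map (AddMonoidHom.mulLeft u) with hΛ
  have hmem_u : ∀ w : ℂ, w ∈ Zi.map (AddMonoidHom.mulLeft u) ↔
      ∃ g : GaussianInt, u * (g : ℂ) = w := by
    intro w
    simp only [AddSubgroup.mem_map, mem_Zi]
    constructor
    · rintro ⟨y, ⟨g, rfl⟩, rfl⟩; exact ⟨g, rfl⟩
    · rintro ⟨g, rfl⟩; exact ⟨(g : ℂ), ⟨g, rfl⟩, rfl⟩
  have hmemΛ : ∀ w : ℂ, w ∈ Λ ↔ (∃ g : GaussianInt, (g : ℂ) = w) ∧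
      (∃ g : GaussianInt, u * (g : ℂ) = w) := by
    intro w
    rw [hΛ, AddSubgroup.mem_inf, hmem_u, mem_Zi]
  have hrel : Λ.relIndex Zi ≠ 0 := by
    apply relindex_ne_zero_of Λ n hn0
    intro g
    rw [hmemΛ]
    constructor
    · exact ⟨(n : GaussianInt) * g, by rw [toComplex_mul, map_natCast]⟩
    · refine ⟨q * star p * g, ?_⟩
      have e : u * ((q * star p * g : GaussianInt) : ℂ) =
          (u * (q : ℂ)) * conj ((p : ℂ)) * (g : ℂ) := by
        rw [toComplex_mul, toComplex_mul, toComplex_star]; ring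
      rw [e, hpq, Complex.mul_conj, ← hncast]
  set c : ℂ := x - (a : ℂ) with hc
  have hcmem : c ∈ shiftedZi x := mem_shiftedZi.mpr ⟨-a, by rw [toComplex_neg]; ring⟩
  have hset : shiftedZi x ∩ ((fun w => u * w) '' shiftedZi x) = c +ᵥ (Λ : Set ℂ) := by
    ext y
    rw [Set.mem_inter_iff, mem_vadd_coset, mem_shiftedZi, hmemΛ]
    constructor
    · rintro ⟨⟨g₁, hg₁⟩, w, hw, himg⟩
      obtain ⟨g₂, rfl⟩ := mem_shiftedZi.mp hw
      have himg' : u * (x + (g₂ : ℂ)) = y := himg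
      constructor
      · exact ⟨g₁ + a, by rw [toComplex_add, hg₁, hc]; ring⟩
      · exact ⟨g₂ - b, by rw [toComplex_sub, hc]; linear_combination himg' + hab⟩
    · rintro ⟨⟨g₃, h₃⟩, ⟨g₄, h₄⟩⟩
      refine ⟨⟨g₃ - a, by rw [toComplex_sub, hc] at *; linear_combination -h₃⟩,
        x + ((b + g₄ : GaussianInt) : ℂ), mem_shiftedZi.mpr ⟨b + g₄, rfl⟩, ?_⟩
      show u * (x + ((b + g₄ : GaussianInt) : ℂ)) = y
      rw [toComplex_add, hc] at *
      linear_combination h₄ - hab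
  exact ⟨⟨isLinIso_rotation hu, c, hcmem, Λ, inf_le_left, hrel, hset⟩, u, hu, fun w => rfl⟩

lemma exists_of_mem_SOCs {x : ℂ} {f : ℂ → ℂ} (hf : f ∈ SOCs x) :
    ∃ u : ℂ, ‖u‖ = 1 ∧ f = (fun w => u * w) ∧
      (∃ p q : GaussianInt, q ≠ 0 ∧ u * (q : ℂ) = (p : ℂ)) ∧
      (∃ a b : GaussianInt, (1 - u) * x = (a : ℂ) + u * (b : ℂ)) := by
  obtain ⟨⟨hiso, c, hcmem, Λ, hΛle, hrel, hset⟩, u, hu, hrot⟩ := hf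
  have hfeq : f = fun w => u * w := funext hrot
  subst hfeq
  have hc2 : c ∈ shiftedZi x ∩ ((fun w => u * w) '' shiftedZi x) := by
    rw [hset]; exact mem_vadd_coset.mpr (by simpa using Λ.zero_mem)
  obtain ⟨g₁, hg₁⟩ := mem_shiftedZi.mp hc2.1
  obtain ⟨w₂, hw₂, hw₂e⟩ := hc2.2
  obtain ⟨g₂, rfl⟩ := mem_shiftedZi.mp hw₂
  have hw₂e' : u * (x + (g₂ : ℂ)) = c := hw₂e
  have hcond : (1 - u) * x = ((-g₁ : GaussianInt) : ℂ) + u * ((g₂ : GaussianInt) : ℂ) := by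
    rw [toComplex_neg]; linear_combination -hg₁ - hw₂e'
  have hΛbot : Λ ≠ ⊥ := by
    intro h
    rw [h, AddSubgroup.relIndex_bot_left] at hrel
    exact hrel (Nat.card_eq_zero.mpr (Or.inr inferInstance))
  obtain ⟨⟨l₀, hl₀Λ⟩, hl₀ne⟩ := AddSubgroup.ne_bot_iff_exists_ne_zero.mp hΛbot
  have hl0 : l₀ ≠ 0 := fun h => hl₀ne (Subtype.ext h)
  have h1 : c + l₀ ∈ shiftedZi x ∩ ((fun w => u * w) '' shiftedZi x) := by
    rw [hset]; exact mem_vadd_coset.mpr (by simpa using hl₀Λ)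
  obtain ⟨g₃, hg₃⟩ := mem_shiftedZi.mp h1.1
  obtain ⟨w₄, hw₄, hw₄e⟩ := h1.2
  obtain ⟨g₄, rfl⟩ := mem_shiftedZi.mp hw₄
  have hw₄e' : u * (x + (g₄ : ℂ)) = c + l₀ := hw₄e
  have hl : u * ((g₄ : ℂ) - (g₂ : ℂ)) = l₀ := by linear_combination hw₄e' - hw₂e'
  refine ⟨u, hu, rfl, ⟨g₃ - g₁, g₄ - g₂, ?_, ?_⟩, ⟨-g₁, g₂, hcond⟩⟩
  · intro h
    apply hl0
    rw [← hl, show (g₄ : ℂ) - (g₂ : ℂ) = 0 from by rw [← toComplex_sub, h, toComplex_zero],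
      mul_zero]
  · rw [toComplex_sub, toComplex_sub, hl]
    linear_combination hg₃ - hg₁

end SOCaux

namespace SOCaux
open GaussianInt EuclideanDomain

-- gcd splitting lemma
lemma gcd_right_mul_dvd (a b c : GaussianInt) :
    gcd a (b * c) ∣ gcd a b * gcd a c := by
  obtain ⟨α, β, hαβ⟩ : ∃ α β, gcd a b = a * α + b * β :=
    ⟨gcdA a b, gcdB a b, gcd_eq_gcd_ab a b⟩
  obtain ⟨γ, δ, hγδ⟩ : ∃ γ δ, gcd a c = a * γ + c * δ :=
    ⟨gcdA a c, gcdB a c, gcd_eq_gcd_ab a c⟩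
  have : gcd a b * gcd a c = a * (a*α*γ + α*c*δ + b*β*γ) + (b*c) * (β*δ) := by
    rw [hαβ, hγδ]; ring
  rw [this]
  exact dvd_add ((gcd_dvd_left a (b*c)).mul_right _) ((gcd_dvd_right a (b*c)).mul_right _)

-- the key arithmetic lemma
lemma key (p q p' q' S : GaussianInt) (hq : q ≠ 0) (hq' : q' ≠ 0)
    (h₁ : ∃ A B C, S = q*q'*A + p*q'*B + p*p'*C)
    (h₂ : ∃ A B C, S = q*q'*A + q*p'*B + p*p'*C) :
    ∃ α β, S = q*q'*α + p*p'*β := by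
  obtain ⟨A₁, B₁, C₁, e₁⟩ := h₁
  obtain ⟨A₂, B₂, C₂, e₂⟩ := h₂
  set d := gcd p q with hd
  have hdq : d ∣ q := gcd_dvd_right p q
  have hdp : d ∣ p := gcd_dvd_left p q
  have hd0 : d ≠ 0 := fun h => hq (zero_dvd_iff.mp (h ▸ hdq))
  obtain ⟨z, hz⟩ := hdp
  obtain ⟨w, hw⟩ := hdq
  have hzw : IsCoprime z w := by
    obtain ⟨α, β, hαβ⟩ : ∃ α β, d = p * α + q * β := ⟨gcdA p q, gcdB p q, gcd_eq_gcd_ab p q⟩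
    refine ⟨α, β, mul_left_cancel₀ hd0 ?_⟩
    rw [mul_one]
    rw [hz, hw] at hαβ
    linear_combination hαβ.symm
  set d' := gcd p' q' with hd'
  have hdq' : d' ∣ q' := gcd_dvd_right p' q'
  have hdp' : d' ∣ p' := gcd_dvd_left p' q'
  have hd0' : d' ≠ 0 := fun h => hq' (zero_dvd_iff.mp (h ▸ hdq'))
  obtain ⟨z', hz'⟩ := hdp'
  obtain ⟨w', hw'⟩ := hdq'
  have hzw' : IsCoprime z' w' := by
    obtain ⟨α, β, hαβ⟩ : ∃ α β, d' = p' * α + q' * β := ⟨gcdA p' q', gcdB p' q', gcd_eq_gcd_ab p' q'⟩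
    refine ⟨α, β, mul_left_cancel₀ hd0' ?_⟩
    rw [mul_one]
    rw [hz', hw'] at hαβ
    linear_combination hαβ.symm
  -- S = d*d' * S₀
  set S₀ := w*w'*A₁ + z*w'*B₁ + z*z'*C₁ with hS₀
  have eS : S = d*d'*S₀ := by rw [e₁, hz, hw, hz', hw', hS₀]; ring
  have eS₂ : S₀ = w*w'*A₂ + w*z'*B₂ + z*z'*C₂ := by
    apply mul_left_cancel₀ (mul_ne_zero hd0 hd0')
    rw [← eS, e₂, hz, hw, hz', hw']; ring
  set g := gcd z w' with hg
  set h := gcd w z' with hh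
  have hgz : g ∣ z := gcd_dvd_left z w'
  have hgw' : g ∣ w' := gcd_dvd_right z w'
  have hhw : h ∣ w := gcd_dvd_left w z'
  have hhz' : h ∣ z' := gcd_dvd_right w z'
  have hcop : IsCoprime g h :=
    ((hzw.of_isCoprime_of_dvd_left hgz).of_isCoprime_of_dvd_right hhw)
  have hgS : g ∣ S₀ := by
    rw [hS₀]
    exact dvd_add (dvd_add ((hgw'.mul_left w).mul_right A₁) ((hgz.mul_right w').mul_right B₁))
      ((hgz.mul_right z').mul_right C₁)
  have hhS : h ∣ S₀ := by
    rw [eS₂]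
    exact dvd_add (dvd_add ((hhw.mul_right w').mul_right A₂) ((hhw.mul_right z').mul_right B₂))
      ((hhz'.mul_left z).mul_right C₂)
  have hghS : g * h ∣ S₀ := hcop.mul_dvd hgS hhS
  set D := gcd (w*w') (z*z') with hD
  have hDgh : D ∣ g * h := by
    have h1 : D ∣ gcd (w*w') z * gcd (w*w') z' := gcd_right_mul_dvd _ _ _
    have h2 : gcd (w*w') z ∣ g := by
      have e : gcd (w*w') z ∣ z := gcd_dvd_right _ _
      have e2 : gcd (w*w') z ∣ w' := by
        have : IsCoprime (gcd (w*w') z) w := hzw.symm.of_isCoprime_of_dvd_right e |>.symm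
        exact this.dvd_of_dvd_mul_left (gcd_dvd_left _ _)
      exact dvd_gcd e e2
    have h3 : gcd (w*w') z' ∣ h := by
      have e : gcd (w*w') z' ∣ z' := gcd_dvd_right _ _
      have e2 : gcd (w*w') z' ∣ w := by
        have : IsCoprime (gcd (w*w') z') w' := hzw'.symm.of_isCoprime_of_dvd_right e |>.symm
        exact this.dvd_of_dvd_mul_right (gcd_dvd_left _ _)
      exact dvd_gcd e2 e
    calc D ∣ gcd (w*w') z * gcd (w*w') z' := h1
    _ ∣ g * h := mul_dvd_mul h2 h3
  obtain ⟨k, hk⟩ := hDgh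
  obtain ⟨m, hm⟩ := hghS
  obtain ⟨A, B, hAB⟩ : ∃ A B, D = (w*w') * A + (z*z') * B :=
    ⟨gcdA _ _, gcdB _ _, gcd_eq_gcd_ab _ _⟩
  refine ⟨A * (k*m), B * (k*m), ?_⟩
  rw [eS, hz, hw, hz', hw', hm, hk, hAB]
  ring

theorem SOC_main (x : ℂ) :
    SOCs x ⊆ SOCs 0 ∧ id ∈ SOCs x ∧
      (∀ f ∈ SOCs x, ∀ g ∈ SOCs x, f ∘ g ∈ SOCs x) ∧
      (∀ f ∈ SOCs x, ∀ g : ℂ → ℂ, g ∘ f = id → f ∘ g = id → g ∈ SOCs x) := by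
  refine ⟨?_, ?_, ?_, ?_⟩
  · -- SOCs x ⊆ SOCs 0
    intro f hf
    obtain ⟨u, hu, rfl, ⟨p, q, hq, hpq⟩, -⟩ := exists_of_mem_SOCs hf
    exact mem_SOCs_of hu p q hq hpq 0 0 (by simp)
  · -- id
    have h : (id : ℂ → ℂ) = fun w => (1 : ℂ) * w := by funext w; simp
    rw [h]
    exact mem_SOCs_of (by simp) 1 1 one_ne_zero (by simp) 0 0 (by simp)
  · -- composition
    intro f hf g hg
    obtain ⟨u, hu, rfl, ⟨p, q, hq, hpq⟩, ⟨a, b, hab⟩⟩ := exists_of_mem_SOCs hf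
    obtain ⟨v, hv, rfl, ⟨p', q', hq', hpq'⟩, ⟨a', b', hab'⟩⟩ := exists_of_mem_SOCs hg
    have hcomp : ((fun w => u * w) ∘ (fun w => v * w)) = fun w => (u * v) * w := by
      funext w; simp [Function.comp, mul_assoc]
    rw [hcomp]
    have huv : ‖u * v‖ = 1 := by rw [norm_mul, hu, hv, one_mul]
    have hqq' : q * q' ≠ 0 := mul_ne_zero hq hq'
    have hpq'' : (u * v) * ((q * q' : GaussianInt) : ℂ) = ((p * p' : GaussianInt) : ℂ) := by
      rw [toComplex_mul, toComplex_mul]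
      calc (u * v) * ((q:ℂ) * (q':ℂ)) = (u * (q:ℂ)) * (v * (q':ℂ)) := by ring
      _ = (p:ℂ) * (p':ℂ) := by rw [hpq, hpq']
    have hqc : (q : ℂ) ≠ 0 := fun h => hq (toComplex_eq_zero.mp h)
    have hqc' : (q' : ℂ) ≠ 0 := fun h => hq' (toComplex_eq_zero.mp h)
    set S₁ : GaussianInt := q*q'*a + p*q'*(b+a') + p*p'*b' with hS₁
    set S₂ : GaussianInt := q*q'*a' + q*p'*(b'+a) + p*p'*b with hS₂
    have e₁ : (S₁ : ℂ) = (q:ℂ) * (q':ℂ) * ((1 - u*v) * x) := by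
      have h1 : (1 - u*v) * x = ((1-u)*x) + u * ((1-v)*x) := by ring
      simp only [hS₁, toComplex_add, toComplex_mul]
      rw [h1, hab, hab', ← hpq, ← hpq']
      ring
    have e₂ : (S₂ : ℂ) = (q:ℂ) * (q':ℂ) * ((1 - u*v) * x) := by
      have h2 : (1 - u*v) * x = ((1-v)*x) + v * ((1-u)*x) := by ring
      simp only [hS₂, toComplex_add, toComplex_mul]
      rw [h2, hab, hab', ← hpq, ← hpq']
      ring
    have hS12 : S₁ = S₂ := toComplex_inj.mp (by rw [e₁, e₂])
    obtain ⟨α, β, hαβ⟩ := key p q p' q' S₁ hq hq' ⟨a, b+a', b', rfl⟩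
      ⟨a', b'+a, b, by rw [hS12]⟩
    have hcast : (S₁ : ℂ) = ((q*q' : GaussianInt):ℂ) * (α:ℂ) +
        ((p*p' : GaussianInt):ℂ) * (β:ℂ) := by
      rw [hαβ]
      simp only [toComplex_add, toComplex_mul]
    have hfin : (1 - u*v) * x = (α:ℂ) + (u*v) * (β:ℂ) := by
      apply mul_left_cancel₀ (mul_ne_zero hqc hqc')
      rw [← e₁, hcast, ← hpq'', toComplex_mul]
      ring
    exact mem_SOCs_of huv (p*p') (q*q') hqq' hpq'' α β hfin
  · -- inverses
    intro f hf g hgf hfg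
    obtain ⟨u, hu, rfl, ⟨p, q, hq, hpq⟩, ⟨a, b, hab⟩⟩ := exists_of_mem_SOCs hf
    have hu0 : u ≠ 0 := u_ne_zero hu
    have hgeq : g = fun w => u⁻¹ * w := by
      funext w
      have h1 : u * g w = w := congrFun hfg w
      have h2 : u⁻¹ * (u * g w) = u⁻¹ * w := by rw [h1]
      rw [← mul_assoc, inv_mul_cancel₀ hu0, one_mul] at h2
      exact h2
    rw [hgeq]
    have hqc : (q : ℂ) ≠ 0 := fun h => hq (toComplex_eq_zero.mp h)
    have hpc : (p : ℂ) ≠ 0 := by rw [← hpq]; exact mul_ne_zero hu0 hqc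
    have hp : p ≠ 0 := fun h => hpc (by rw [h, toComplex_zero])
    have hu' : ‖u⁻¹‖ = 1 := by rw [norm_inv, hu]; norm_num
    have hqp : u⁻¹ * (p:ℂ) = (q:ℂ) := by rw [← hpq, ← mul_assoc, inv_mul_cancel₀ hu0, one_mul]
    have hcond : (1 - u⁻¹) * x = ((-b : GaussianInt):ℂ) + u⁻¹ * ((-a : GaussianInt):ℂ) := by
      rw [toComplex_neg, toComplex_neg]
      have h2 : (1 - u⁻¹) * x = -u⁻¹ * ((1-u)*x) := by field_simp; ring
      rw [h2, hab]
      field_simp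
      ring
    exact mem_SOCs_of hu' q p hp hqp (-b) (-a) hcond

end SOCaux


theorem SOC_shifted_subgroup (x : ℂ) :
    SOCs x ⊆ SOCs 0 ∧ id ∈ SOCs x ∧
      (∀ f ∈ SOCs x, ∀ g ∈ SOCs x, f ∘ g ∈ SOCs x) ∧
      (∀ f ∈ SOCs x, ∀ g : ℂ → ℂ, g ∘ f = id → f ∘ g = id → g ∈ SOCs x) := by
  exact SOCaux.SOC_main x
end

section
/- Let x ∈ ℂ and suppose OC(x+Γ) contains a reflection T of the form w ↦ i^k·conj(w) for some k ∈ {0,1,2,3} (a reflection in the point group of Γ). Then OC(x+Γ) is a subgroup of OC(Γ), and OC(x+Γ) = SOC(x+Γ) ∪ {S ∘ T : S ∈ SOC(x+Γ)}. -/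
open Pointwise Complex ComplexConjugate

/-! ### Auxiliary development -/

namespace OCAux

open GaussianInt

lemma mem_Zi {w : ℂ} : w ∈ Zi ↔ ∃ a : GaussianInt, (toComplex a : ℂ) = w := Iff.rfl

lemma Zi_mem (a : GaussianInt) : (toComplex a : ℂ) ∈ Zi := ⟨a, rfl⟩

lemma Zi_mul {w z : ℂ} (hw : w ∈ Zi) (hz : z ∈ Zi) : w * z ∈ Zi := by
  obtain ⟨a, rfl⟩ := hw; obtain ⟨b, rfl⟩ := hz
  exact ⟨a * b, toComplex_mul a b⟩

lemma Zi_conj {w : ℂ} (hw : w ∈ Zi) : conj w ∈ Zi := by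
  obtain ⟨a, rfl⟩ := hw
  exact ⟨star a, toComplex_star a⟩

lemma I_mem_Zi : I ∈ Zi := ⟨⟨0, 1⟩, by simp [toComplex_def']⟩

noncomputable def mulSub (u : ℂ) : AddSubgroup ℂ := Zi.map (AddMonoidHom.mulLeft u)

noncomputable def Msub (u : ℂ) : AddSubgroup ℂ := Zi ⊔ mulSub u

lemma mem_mulSub {u y : ℂ} : y ∈ mulSub u ↔ ∃ b : GaussianInt, u * toComplex b = y := by
  constructor
  · rintro ⟨w, ⟨b, rfl⟩, rfl⟩; exact ⟨b, rfl⟩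
  · rintro ⟨b, rfl⟩; exact ⟨toComplex b, Zi_mem b, rfl⟩

lemma mem_Msub {u y : ℂ} : y ∈ Msub u ↔ ∃ a b : GaussianInt, y = toComplex a + u * toComplex b := by
  rw [Msub, AddSubgroup.mem_sup]
  constructor
  · rintro ⟨p, ⟨a, rfl⟩, q, hq, rfl⟩
    obtain ⟨b, rfl⟩ := mem_mulSub.mp hq
    exact ⟨a, b, rfl⟩
  · rintro ⟨a, b, rfl⟩
    exact ⟨_, Zi_mem a, _, mem_mulSub.mpr ⟨b, rfl⟩, rfl⟩

def Qu (u : ℂ) : Prop := ∃ w z : GaussianInt, z ≠ 0 ∧ (toComplex z : ℂ) * u = toComplex w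

def Cr (x u : ℂ) : Prop := x * (1 - u) ∈ Msub u

noncomputable def rho : GaussianInt →+ Zi :=
  AddMonoidHom.codRestrict GaussianInt.toComplex.toAddMonoidHom Zi (fun a => Zi_mem a)

lemma rho_surj : Function.Surjective rho := by
  rintro ⟨w, a, rfl⟩
  exact ⟨a, rfl⟩

instance : Infinite GaussianInt :=
  Infinite.of_injective (fun n : ℤ => (⟨n, 0⟩ : GaussianInt))
    (fun a b h => by simpa [Zsqrtd.ext_iff] using h)

instance : Infinite Zi :=
  Infinite.of_injective rho (fun a b h => toComplex_injective (by
    have := congrArg (Subtype.val) h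
    exact this))

lemma finite_quot (d : GaussianInt) (hd : d ≠ 0) :
    Finite (Zi ⧸ ((Zi.map (AddMonoidHom.mulLeft (toComplex d))).addSubgroupOf Zi)) := by
  set A := ((Zi.map (AddMonoidHom.mulLeft (toComplex d))).addSubgroupOf Zi)
  set N : ℕ := d.norm.natAbs with hNdef
  have hNpos : (N : ℤ) = d.norm := Int.natAbs_of_nonneg (Zsqrtd.norm_nonneg (by norm_num) d)
  have hN0 : N ≠ 0 := by
    intro h
    apply hd
    rw [← GaussianInt.norm_eq_zero, ← hNpos, h, Nat.cast_zero]
  haveI : NeZero N := ⟨hN0⟩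
  -- the reduction-mod-N map
  let ψ : GaussianInt →+ (ZMod N × ZMod N) :=
    AddMonoidHom.mk' (fun g => ((g.re : ZMod N), (g.im : ZMod N)))
      (by intro g h; simp [Zsqrtd.re_add, Zsqrtd.im_add, Prod.ext_iff])
  have hker : ∀ g : GaussianInt, ψ g = 0 → ∃ c, d * c = g := by
    intro g hg
    rw [Prod.ext_iff] at hg
    obtain ⟨h1, h2⟩ := hg
    obtain ⟨r, hr⟩ := (ZMod.intCast_zmod_eq_zero_iff_dvd _ _).mp h1
    obtain ⟨s, hs⟩ := (ZMod.intCast_zmod_eq_zero_iff_dvd _ _).mp h2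
    refine ⟨star d * ⟨r, s⟩, ?_⟩
    have : d * (star d * ⟨r, s⟩) = (d.norm : GaussianInt) * ⟨r, s⟩ := by
      rw [← mul_assoc, ← Zsqrtd.norm_eq_mul_conj]
    rw [this]
    ext
    · simp [Zsqrtd.re_mul, Zsqrtd.re_intCast, Zsqrtd.im_intCast, hr, ← hNpos]
    · simp [Zsqrtd.im_mul, Zsqrtd.re_intCast, Zsqrtd.im_intCast, hs, ← hNpos]
  haveI hfin1 : Finite (GaussianInt ⧸ (ψ.ker)) :=
    Finite.of_injective _ (QuotientAddGroup.kerLift_injective ψ)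
  let q : GaussianInt →+ (Zi ⧸ A) := (QuotientAddGroup.mk' A).comp rho
  have hq_surj : Function.Surjective q :=
    (QuotientAddGroup.mk'_surjective A).comp rho_surj
  have hkerq : ∀ g ∈ ψ.ker, g ∈ q.ker := by
    intro g hg
    obtain ⟨c, hc⟩ := hker g hg
    rw [AddMonoidHom.mem_ker]
    show QuotientAddGroup.mk' A (rho g) = 0
    rw [QuotientAddGroup.mk'_apply, QuotientAddGroup.eq_zero_iff]
    rw [AddSubgroup.mem_addSubgroupOf]
    refine ⟨toComplex c, Zi_mem c, ?_⟩
    show toComplex d * toComplex c = _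
    rw [← toComplex_mul, hc]
    rfl
  let q' : (GaussianInt ⧸ ψ.ker) →+ (Zi ⧸ A) :=
    QuotientAddGroup.lift ψ.ker q hkerq
  have hq'_surj : Function.Surjective q' := by
    intro y
    obtain ⟨g, hg⟩ := hq_surj y
    exact ⟨QuotientAddGroup.mk g, hg⟩
  exact Finite.of_surjective q' hq'_surj

lemma relindex_map_ne_zero (d : GaussianInt) (hd : d ≠ 0) :
    ((Zi.map (AddMonoidHom.mulLeft (toComplex d))).relIndex Zi) ≠ 0 := by
  haveI := finite_quot d hd
  rw [AddSubgroup.relIndex, AddSubgroup.index]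
  exact Nat.card_ne_zero.mpr ⟨inferInstance, inferInstance⟩

lemma relindex_inf_ne_zero {u : ℂ} (hu : u ≠ 0) (hq : Qu u) :
    ((Zi ⊓ mulSub u).relIndex Zi) ≠ 0 := by
  obtain ⟨w, z, hz, hwz⟩ := hq
  have hw : w ≠ 0 := by
    intro h
    subst h
    rw [toComplex_zero, mul_comm] at hwz
    rcases mul_eq_zero.mp hwz with h | h
    · exact hu h
    · exact hz (toComplex_inj.mp (by rwa [toComplex_zero]))
  set d : GaussianInt := w * star z with hddef
  have hd : d ≠ 0 := mul_ne_zero hw (star_ne_zero.mpr hz)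
  have hle1 : Zi.map (AddMonoidHom.mulLeft (toComplex d)) ≤ Zi ⊓ mulSub u := by
    rintro y ⟨p, ⟨b, rfl⟩, rfl⟩
    constructor
    · exact ⟨d * b, toComplex_mul d b⟩
    · refine mem_mulSub.mpr ⟨z * star z * b, ?_⟩
      show u * toComplex (z * star z * b) = toComplex d * toComplex b
      rw [toComplex_mul, toComplex_mul, hddef, toComplex_mul]
      rw [← hwz]
      ring
  have hle2 : (Zi ⊓ mulSub u : AddSubgroup ℂ) ≤ Zi := inf_le_left
  have := AddSubgroup.relIndex_mul_relIndex _ _ Zi hle1 hle2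
  intro h
  rw [h, mul_zero] at this
  exact relindex_map_ne_zero d hd this.symm

lemma Qu_of_relindex {u : ℂ} (h : ((Zi ⊓ mulSub u).relIndex Zi) ≠ 0) : Qu u := by
  by_contra hq
  apply h
  have hbot : (Zi ⊓ mulSub u : AddSubgroup ℂ) = ⊥ := by
    rw [eq_bot_iff]
    rintro y ⟨hy1, hy2⟩
    obtain ⟨a, ha⟩ := hy1
    obtain ⟨b, hb⟩ := mem_mulSub.mp hy2
    by_contra hy0
    have hyne : y ≠ 0 := by simpa using hy0
    exact hq ⟨a, b, fun h0 => hyne (by rw [← hb, h0, toComplex_zero, mul_zero]),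
      by rw [mul_comm, hb]; exact ha.symm⟩
  rw [hbot, AddSubgroup.relIndex, AddSubgroup.index]
  have : (⊥ : AddSubgroup ℂ).addSubgroupOf Zi = ⊥ := by
    ext y
    simp [AddSubgroup.mem_addSubgroupOf]
  rw [this]
  have e := QuotientAddGroup.quotientBot (G := Zi)
  have : Infinite ((Zi : AddSubgroup ℂ) ⧸ (⊥ : AddSubgroup Zi)) :=
    Infinite.of_injective (⇑e.symm) e.symm.injective
  exact Nat.card_eq_zero_of_infinite


lemma mem_shiftedZi {x w : ℂ} : w ∈ shiftedZi x ↔ ∃ a : GaussianInt, w = x + toComplex a := by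
  constructor
  · rintro ⟨y, hy, rfl⟩
    obtain ⟨a, rfl⟩ := hy
    exact ⟨a, rfl⟩
  · rintro ⟨a, rfl⟩
    exact ⟨toComplex a, Zi_mem a, rfl⟩

/-- The master characterization of membership in `OCs x`. -/
lemma mem_OCs_aux (x : ℂ) (f : ℂ → ℂ) (u : ℂ) (hu : u ≠ 0) (hlin : IsLinIso f)
    (himg : f '' shiftedZi x = {y | ∃ b : GaussianInt, y = f x + u * toComplex b}) :
    f ∈ OCs x ↔ Qu u ∧ (x - f x) ∈ Msub u := by
  -- the master coset identity
  have master : ∀ c : ℂ, c ∈ shiftedZi x → (∃ b : GaussianInt, c = f x + u * toComplex b) →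
      shiftedZi x ∩ (f '' shiftedZi x) = c +ᵥ ((Zi ⊓ mulSub u : AddSubgroup ℂ) : Set ℂ) := by
    rintro c hc ⟨b, hb⟩
    obtain ⟨a, ha⟩ := mem_shiftedZi.mp hc
    ext y
    constructor
    · rintro ⟨hy1, hy2⟩
      rw [himg] at hy2
      obtain ⟨a', ha'⟩ := mem_shiftedZi.mp hy1
      obtain ⟨b', hb'⟩ := hy2
      refine ⟨y - c, ⟨⟨a' - a, ?_⟩, mem_mulSub.mpr ⟨b' - b, ?_⟩⟩, by simp⟩
      · show toComplex (a' - a) = y - c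
        rw [toComplex_sub, ha', ha]; ring
      · rw [toComplex_sub, hb', hb]; ring
    · rintro ⟨m, ⟨⟨a'', ha''⟩, hm2⟩, rfl⟩
      obtain ⟨b'', hb''⟩ := mem_mulSub.mp hm2
      have ha2 : toComplex a'' = m := ha''
      constructor
      · exact mem_shiftedZi.mpr ⟨a + a'', by
          show c + m = x + toComplex (a + a''); rw [toComplex_add, ha, ha2]; ring⟩
      · rw [himg]
        exact ⟨b + b'', by
          show c + m = f x + u * toComplex (b + b''); rw [toComplex_add, hb, ← hb'']; ring⟩
  constructor
  · rintro ⟨-, c, hc, Λ, hΛ, hidx, hEq⟩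
    have hcmem : c ∈ shiftedZi x ∩ (f '' shiftedZi x) := by
      rw [hEq]
      exact ⟨0, AddSubgroup.zero_mem Λ, add_zero c⟩
    obtain ⟨hc1, hc2⟩ := hcmem
    rw [himg] at hc2
    obtain ⟨b, hb⟩ := hc2
    obtain ⟨a, ha⟩ := mem_shiftedZi.mp hc1
    constructor
    · -- Qu u via forced Λ
      apply Qu_of_relindex
      have hsets : (Λ : Set ℂ) = ((Zi ⊓ mulSub u : AddSubgroup ℂ) : Set ℂ) := by
        have h2 := master c hc1 ⟨b, hb⟩
        rw [hEq] at h2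
        ext y
        constructor
        · intro hy
          have : c + y ∈ c +ᵥ ((Zi ⊓ mulSub u : AddSubgroup ℂ) : Set ℂ) := by
            rw [← h2]; exact ⟨y, hy, rfl⟩
          obtain ⟨m, hm, hm'⟩ := this
          have : y = m := by
            have : c + y = c + m := hm'.symm
            exact (add_left_cancel this)
          rwa [this]
        · intro hy
          have : c + y ∈ c +ᵥ (Λ : Set ℂ) := by
            rw [h2]; exact ⟨y, hy, rfl⟩
          obtain ⟨m, hm, hm'⟩ := this
          have : y = m := add_left_cancel (hm'.symm : c + y = c + m)
          rwa [this]
      have : Λ = Zi ⊓ mulSub u := SetLike.ext' hsets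
      rwa [← this]
    · -- shift condition
      refine mem_Msub.mpr ⟨-a, b, ?_⟩
      rw [toComplex_neg]
      linear_combination hb - ha
  · rintro ⟨hq, hm⟩
    obtain ⟨a, b, hab⟩ := mem_Msub.mp hm
    refine ⟨hlin, x + toComplex (-a), mem_shiftedZi.mpr ⟨-a, rfl⟩, Zi ⊓ mulSub u, inf_le_left,
      relindex_inf_ne_zero hu hq, ?_⟩
    apply master
    · exact mem_shiftedZi.mpr ⟨-a, rfl⟩
    · refine ⟨b, ?_⟩
      rw [toComplex_neg]
      have : x - f x = toComplex a + u * toComplex b := hab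
      rw [eq_comm]
      linear_combination -this


lemma circle_mk (u : ℂ) (hu : ‖u‖ = 1) : u ∈ Submonoid.unitSphere ℂ := by
  simpa [Submonoid.unitSphere] using mem_sphere_zero_iff_norm.mpr hu

lemma isLinIso_rot {u : ℂ} (hu : ‖u‖ = 1) {f : ℂ → ℂ} (hf : ∀ w, f w = u * w) :
    IsLinIso f := by
  refine ⟨rotation (⟨u, circle_mk u hu⟩ : Circle), funext fun w => ?_⟩
  rw [hf w]; exact rotation_apply _ w

lemma isLinIso_refl {u : ℂ} (hu : ‖u‖ = 1) {f : ℂ → ℂ} (hf : ∀ w, f w = u * conj w) :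
    IsLinIso f := by
  refine ⟨conjLIE.trans (rotation (⟨u, circle_mk u hu⟩ : Circle)), funext fun w => ?_⟩
  rw [hf w]
  show rotation _ (conjLIE w) = _
  rw [conjLIE_apply]; exact rotation_apply _ _

lemma classify {f : ℂ → ℂ} (h : IsLinIso f) :
    ∃ u : ℂ, ‖u‖ = 1 ∧ ((∀ w, f w = u * w) ∨ (∀ w, f w = u * conj w)) := by
  obtain ⟨R, rfl⟩ := h
  obtain ⟨a, ha | ha⟩ := linear_isometry_complex R
  · exact ⟨a, by exact Circle.norm_coe a, Or.inl fun w => by rw [ha, rotation_apply]⟩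
  · exact ⟨a, by exact Circle.norm_coe a, Or.inr fun w => by
      rw [ha]
      show rotation _ (conjLIE w) = _
      rw [conjLIE_apply, rotation_apply]⟩

lemma image_rot (x u : ℂ) (f : ℂ → ℂ) (hf : ∀ w, f w = u * w) :
    f '' shiftedZi x = {y | ∃ b : GaussianInt, y = f x + u * toComplex b} := by
  ext y
  constructor
  · rintro ⟨w, hw, rfl⟩
    obtain ⟨a, rfl⟩ := mem_shiftedZi.mp hw
    exact ⟨a, by rw [hf, hf]; ring⟩
  · rintro ⟨b, rfl⟩
    exact ⟨x + toComplex b, mem_shiftedZi.mpr ⟨b, rfl⟩, by rw [hf, hf]; ring⟩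

lemma image_refl (x u : ℂ) (f : ℂ → ℂ) (hf : ∀ w, f w = u * conj w) :
    f '' shiftedZi x = {y | ∃ b : GaussianInt, y = f x + u * toComplex b} := by
  ext y
  constructor
  · rintro ⟨w, hw, rfl⟩
    obtain ⟨a, rfl⟩ := mem_shiftedZi.mp hw
    refine ⟨star a, ?_⟩
    rw [hf, hf, toComplex_star, map_add]
    ring
  · rintro ⟨b, rfl⟩
    refine ⟨x + toComplex (star b), mem_shiftedZi.mpr ⟨star b, rfl⟩, ?_⟩
    rw [hf, hf, toComplex_star, map_add, Complex.conj_conj]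
    ring

lemma mem_OCs_rot (x u : ℂ) (hu : ‖u‖ = 1) (f : ℂ → ℂ) (hf : ∀ w, f w = u * w) :
    f ∈ OCs x ↔ Qu u ∧ Cr x u := by
  have hu0 : u ≠ 0 := fun h => by simp [h] at hu
  rw [mem_OCs_aux x f u hu0 (isLinIso_rot hu hf) (image_rot x u f hf)]
  have : x - f x = x * (1 - u) := by rw [hf]; ring
  rw [this, Cr]

lemma mem_OCs_refl (x u : ℂ) (hu : ‖u‖ = 1) (f : ℂ → ℂ) (hf : ∀ w, f w = u * conj w) :
    f ∈ OCs x ↔ Qu u ∧ x - u * conj x ∈ Msub u := by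
  have hu0 : u ≠ 0 := fun h => by simp [h] at hu
  rw [mem_OCs_aux x f u hu0 (isLinIso_refl hu hf) (image_refl x u f hf), hf]


lemma toComplex_ne_zero {z : GaussianInt} (hz : z ≠ 0) : (toComplex z : ℂ) ≠ 0 :=
  fun h => hz (toComplex_eq_zero.mp h)

lemma exists_coprime_rep {u : ℂ} (hq : Qu u) :
    ∃ w z : GaussianInt, z ≠ 0 ∧ IsCoprime w z ∧ (toComplex z : ℂ) * u = toComplex w := by
  obtain ⟨w, z, hz, h⟩ := hq
  set g := EuclideanDomain.gcd w z with hg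
  have hgz : g ∣ z := EuclideanDomain.gcd_dvd_right w z
  have hgw : g ∣ w := EuclideanDomain.gcd_dvd_left w z
  obtain ⟨z', hz'⟩ := hgz
  obtain ⟨w', hw'⟩ := hgw
  have hgne : g ≠ 0 := fun h0 => hz (by
    rw [hz', h0, zero_mul])
  have hz'ne : z' ≠ 0 := fun h0 => hz (by rw [hz', h0, mul_zero])
  refine ⟨w', z', hz'ne, ?_, ?_⟩
  · -- coprime via Bezout
    have hb := EuclideanDomain.gcd_eq_gcd_ab w z
    refine ⟨EuclideanDomain.gcdA w z, EuclideanDomain.gcdB w z, ?_⟩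
    have h1 : g * 1 = g * (EuclideanDomain.gcdA w z * w' + EuclideanDomain.gcdB w z * z') := by
      linear_combination hb + EuclideanDomain.gcdA w z * hw' + EuclideanDomain.gcdB w z * hz'
    exact (mul_left_cancel₀ hgne h1).symm
  · -- ratio
    have hc : (toComplex g : ℂ) * (toComplex z' * u) = toComplex g * toComplex w' := by
      rw [← mul_assoc, ← toComplex_mul, ← hz', h, hw', toComplex_mul]
    exact mul_left_cancel₀ (toComplex_ne_zero hgne) hc


lemma Cr_rep_of {x u : ℂ} {w z : GaussianInt} (hz : z ≠ 0)
    (h : (toComplex z : ℂ) * u = toComplex w) (hc : Cr x u) :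
    ∃ P : GaussianInt, x * (toComplex z - toComplex w) = toComplex P := by
  obtain ⟨a, b, hab⟩ := mem_Msub.mp hc
  refine ⟨z * a + w * b, ?_⟩
  rw [toComplex_add, toComplex_mul, toComplex_mul]
  linear_combination toComplex z * hab + (x + toComplex b) * h


lemma Qu_mul {u v : ℂ} (hu : Qu u) (hv : Qu v) : Qu (u * v) := by
  obtain ⟨w₁, z₁, hz₁, h₁⟩ := hu
  obtain ⟨w₂, z₂, hz₂, h₂⟩ := hv
  refine ⟨w₁ * w₂, z₁ * z₂, mul_ne_zero hz₁ hz₂, ?_⟩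
  rw [toComplex_mul, toComplex_mul]
  linear_combination toComplex z₂ * v * h₁ + toComplex w₁ * h₂

lemma Cr_mul {x u v : ℂ} (hqu : Qu u) (hqv : Qu v) (hcu : Cr x u) (hcv : Cr x v) :
    Cr x (u * v) := by
  obtain ⟨w₁, z₁, hz₁, hco₁, h₁⟩ := exists_coprime_rep hqu
  obtain ⟨w₂, z₂, hz₂, hco₂, h₂⟩ := exists_coprime_rep hqv
  obtain ⟨P, hP⟩ := Cr_rep_of hz₁ h₁ hcu
  obtain ⟨Q, hQ⟩ := Cr_rep_of hz₂ h₂ hcv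
  obtain ⟨a₁, b₁, e₁⟩ := hco₁
  obtain ⟨a₂, b₂, e₂⟩ := hco₂
  refine mem_Msub.mpr ⟨b₁*b₂*(z₂*P + w₁*Q) + a₁*b₂*(w₁*Q) + b₁*a₂*(w₂*P),
    a₁*a₂*(z₂*P + w₁*Q) + a₁*b₂*(z₂*P) + b₁*a₂*(z₁*Q), ?_⟩
  have hz₁c : (toComplex z₁ : ℂ) ≠ 0 := toComplex_ne_zero hz₁
  have hz₂c : (toComplex z₂ : ℂ) ≠ 0 := toComplex_ne_zero hz₂
  have e₁c : (toComplex a₁ : ℂ) * toComplex w₁ + toComplex b₁ * toComplex z₁ = 1 := by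
    have h := congrArg toComplex e₁
    rwa [toComplex_add, toComplex_mul, toComplex_mul, toComplex_one] at h
  have e₂c : (toComplex a₂ : ℂ) * toComplex w₂ + toComplex b₂ * toComplex z₂ = 1 := by
    have h := congrArg toComplex e₂
    rwa [toComplex_add, toComplex_mul, toComplex_mul, toComplex_one] at h
  simp only [toComplex_add, toComplex_mul]
  set X := x with hXd
  set U := u with hUd
  set V := v with hVd
  set Z₁ := (toComplex z₁ : ℂ)
  set Z₂ := (toComplex z₂ : ℂ)
  set W₁ := (toComplex w₁ : ℂ)
  set W₂ := (toComplex w₂ : ℂ)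
  set Pc := (toComplex P : ℂ)
  set Qc := (toComplex Q : ℂ)
  set A₁ := (toComplex a₁ : ℂ)
  set B₁ := (toComplex b₁ : ℂ)
  set A₂ := (toComplex a₂ : ℂ)
  set B₂ := (toComplex b₂ : ℂ)
  apply mul_left_cancel₀ (mul_ne_zero hz₁c hz₂c)
  have hW : Z₁ * Z₂ * (U * V) = W₁ * W₂ := by
    linear_combination Z₂ * V * h₁ + W₁ * h₂
  have hX : Z₁ * Z₂ * (X * (1 - U * V)) = Z₂ * Pc + W₁ * Qc := by
    linear_combination Z₂ * hP + W₁ * hQ - X * hW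
  have hYeq : Z₂ * Pc + W₁ * Qc = W₂ * Pc + Z₁ * Qc := by
    linear_combination (Z₁ - W₁) * hQ - (Z₂ - W₂) * hP
  have key : Z₂ * Pc + W₁ * Qc =
      Z₁ * Z₂ * (B₁*B₂*(Z₂*Pc + W₁*Qc) + A₁*B₂*(W₁*Qc) + B₁*A₂*(W₂*Pc)) +
      W₁ * W₂ * (A₁*A₂*(Z₂*Pc + W₁*Qc) + A₁*B₂*(Z₂*Pc) + B₁*A₂*(Z₁*Qc)) := by
    linear_combination (-(Z₂*Pc + W₁*Qc) * (A₂*W₂ + B₂*Z₂)) * e₁c - (Z₂*Pc + W₁*Qc) * e₂c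
      + (A₁*B₂*W₁*Z₂) * hYeq
  linear_combination hX + key - (A₁*A₂*(Z₂*Pc + W₁*Qc) + A₁*B₂*(Z₂*Pc) + B₁*A₂*(Z₁*Qc)) * hW


lemma Qu_conj {u : ℂ} (hu : Qu u) : Qu (conj u) := by
  obtain ⟨w, z, hz, h⟩ := hu
  refine ⟨star w, star z, star_ne_zero.mpr hz, ?_⟩
  rw [toComplex_star, toComplex_star, ← map_mul, h]

lemma Cr_conj {x u : ℂ} (hn : ‖u‖ = 1) (hc : Cr x u) : Cr x (conj u) := by
  have huu : u * conj u = 1 := by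
    rw [Complex.mul_conj, Complex.normSq_eq_norm_sq, hn]
    norm_num
  obtain ⟨a, b, hab⟩ := mem_Msub.mp hc
  refine mem_Msub.mpr ⟨-b, -a, ?_⟩
  rw [toComplex_neg, toComplex_neg]
  linear_combination (-(conj u)) * hab - (x + toComplex b) * huu

lemma Qu_of_mem_Zi {e : ℂ} (he : e ∈ Zi) : Qu e := by
  obtain ⟨a, ha⟩ := he
  have ha' : (toComplex a : ℂ) = e := ha
  exact ⟨a, 1, one_ne_zero, by rw [toComplex_one, one_mul, ha']⟩

/-- `Msub` is invariant under multiplying by a unit of the lattice. -/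
lemma Msub_mul_unit {u e e' : ℂ} (he : e ∈ Zi) (he' : e' ∈ Zi) (hee : e * e' = 1) :
    Msub (u * e) = Msub u := by
  apply le_antisymm
  · intro y hy
    obtain ⟨a, b, rfl⟩ := mem_Msub.mp hy
    obtain ⟨c, hc⟩ := Zi_mul he (Zi_mem b)
    have hc' : (toComplex c : ℂ) = e * toComplex b := hc
    refine mem_Msub.mpr ⟨a, c, ?_⟩
    rw [hc']
    ring
  · intro y hy
    obtain ⟨a, b, rfl⟩ := mem_Msub.mp hy
    obtain ⟨c, hc⟩ := Zi_mul he' (Zi_mem b)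
    have hc' : (toComplex c : ℂ) = e' * toComplex b := hc
    refine mem_Msub.mpr ⟨a, c, ?_⟩
    rw [hc']
    linear_combination (-(u * toComplex b)) * hee

/-- Transform the reflection condition into a rotation condition, given the
point-symmetry datum `hx`. -/
lemma refl_cond_iff {x t : ℂ} (htZ : t ∈ Zi) (htcZ : conj t ∈ Zi) (htt : t * conj t = 1)
    (hx : x - t * conj x ∈ Zi) (u : ℂ) :
    (x - u * conj x ∈ Msub u) ↔ Cr x (u * conj t) := by
  have hM : Msub (u * conj t) = Msub u := Msub_mul_unit htcZ htZ (by linear_combination htt)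
  rw [Cr, hM]
  obtain ⟨g, hg⟩ := hx
  have hg' : (toComplex g : ℂ) = x - t * conj x := hg
  have hconjx : conj x = conj t * x - conj t * toComplex g := by
    linear_combination conj t * hg' - conj x * htt
  have hdiff : x - u * conj x = x * (1 - u * conj t) + u * (conj t * toComplex g) := by
    rw [hconjx]; ring
  obtain ⟨ct, hct⟩ := htcZ
  have hct' : (toComplex ct : ℂ) = conj t := hct
  have hmemg : u * (conj t * toComplex g) ∈ Msub u := by
    apply AddSubgroup.mem_sup_right
    refine mem_mulSub.mpr ⟨ct * g, ?_⟩
    rw [toComplex_mul, hct']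
  constructor
  · intro h
    have heq : x * (1 - u * conj t) = (x - u * conj x) - u * (conj t * toComplex g) := by
      linear_combination -hdiff
    rw [heq]
    exact AddSubgroup.sub_mem _ h hmemg
  · intro h
    rw [hdiff]
    exact AddSubgroup.add_mem _ h hmemg

lemma unit_mul_conj {u : ℂ} (hn : ‖u‖ = 1) : u * conj u = 1 := by
  rw [Complex.mul_conj, Complex.normSq_eq_norm_sq, hn]
  norm_num

lemma norm_conj' (z : ℂ) : ‖conj z‖ = ‖z‖ := by
  rw [Complex.norm_conj]

lemma Zi_pow {w : ℂ} (hw : w ∈ Zi) (n : ℕ) : w ^ n ∈ Zi := by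
  induction n with
  | zero => exact ⟨1, by show (toComplex 1 : ℂ) = w ^ 0; rw [toComplex_one, pow_zero]⟩
  | succ n ih => rw [pow_succ]; exact Zi_mul ih hw

end OCAux

open OCAux GaussianInt

theorem OC_shifted_subgroup_of_point_group_reflection (x : ℂ) (k : ℕ) (hk : k < 4)
    (hT : (fun w => I ^ k * conj w) ∈ OCs x) :
    (OCs x ⊆ OCs 0 ∧ id ∈ OCs x ∧ (∀ f ∈ OCs x, ∀ g ∈ OCs x, f ∘ g ∈ OCs x) ∧
        (∀ f ∈ OCs x, ∀ g : ℂ → ℂ, g ∘ f = id → f ∘ g = id → g ∈ OCs x)) ∧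
      OCs x = SOCs x ∪ (fun S => S ∘ (fun w => I ^ k * conj w)) '' SOCs x := by
  set t : ℂ := I ^ k with htdef
  have htn : ‖t‖ = 1 := by rw [htdef, norm_pow, Complex.norm_I, one_pow]
  have htZ : t ∈ Zi := Zi_pow I_mem_Zi k
  have htcZ : conj t ∈ Zi := Zi_conj htZ
  have htt : t * conj t = 1 := unit_mul_conj htn
  -- the reflection hypothesis gives the point-symmetry datum
  have hTapp : ∀ w : ℂ, (fun w => t * conj w : ℂ → ℂ) w = t * conj w := fun _ => rfl
  have hT1 := (mem_OCs_refl x t htn _ hTapp).mp hT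
  have hx : x - t * conj x ∈ Zi := by
    obtain ⟨a, b, hab⟩ := mem_Msub.mp hT1.2
    rw [hab]
    exact AddSubgroup.add_mem _ (Zi_mem a) (Zi_mul htZ (Zi_mem b))
  -- packaged characterization of reflections in `OCs x`
  have hrefl : ∀ (u : ℂ), ‖u‖ = 1 → ∀ f : ℂ → ℂ, (∀ w, f w = u * conj w) →
      (f ∈ OCs x ↔ Qu (u * conj t) ∧ Cr x (u * conj t)) := by
    intro u hn f hf
    rw [mem_OCs_refl x u hn f hf, refl_cond_iff htZ htcZ htt hx u]
    constructor
    · rintro ⟨hq, hc⟩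
      exact ⟨Qu_mul hq (Qu_of_mem_Zi htcZ), hc⟩
    · rintro ⟨hq, hc⟩
      refine ⟨?_, hc⟩
      have h2 := Qu_mul hq (Qu_of_mem_Zi htZ)
      have he : u * conj t * t = u := by linear_combination u * htt
      rwa [he] at h2
  -- composition closure
  have hcomp : ∀ f ∈ OCs x, ∀ g ∈ OCs x, f ∘ g ∈ OCs x := by
    intro f hf g hg
    obtain ⟨u, hun, hfc⟩ := classify hf.1
    obtain ⟨v, hvn, hgc⟩ := classify hg.1
    rcases hfc with hfr | hff <;> rcases hgc with hgr | hgf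
    · -- rotation ∘ rotation
      have h1 := (mem_OCs_rot x u hun f hfr).mp hf
      have h2 := (mem_OCs_rot x v hvn g hgr).mp hg
      exact (mem_OCs_rot x (u * v) (by rw [norm_mul, hun, hvn, one_mul]) (f ∘ g)
        (fun w => by rw [Function.comp_apply, hgr w, hfr (v * w)]; ring)).mpr
        ⟨Qu_mul h1.1 h2.1, Cr_mul h1.1 h2.1 h1.2 h2.2⟩
    · -- rotation ∘ reflection
      have h1 := (mem_OCs_rot x u hun f hfr).mp hf
      have h2 := (hrefl v hvn g hgf).mp hg
      refine (hrefl (u * v) (by rw [norm_mul, hun, hvn, one_mul]) (f ∘ g)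
        (fun w => by rw [Function.comp_apply, hgf w, hfr (v * conj w)]; ring)).mpr ?_
      have he : u * (v * conj t) = u * v * conj t := by ring
      rw [← he]
      exact ⟨Qu_mul h1.1 h2.1, Cr_mul h1.1 h2.1 h1.2 h2.2⟩
    · -- reflection ∘ rotation
      have h1 := (hrefl u hun f hff).mp hf
      have h2 := (mem_OCs_rot x v hvn g hgr).mp hg
      have h2c : Qu (conj v) ∧ Cr x (conj v) := ⟨Qu_conj h2.1, Cr_conj hvn h2.2⟩
      refine (hrefl (u * conj v) (by rw [norm_mul, hun, norm_conj', hvn, one_mul]) (f ∘ g)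
        (fun w => by rw [Function.comp_apply, hgr w, hff (v * w), map_mul]; ring)).mpr ?_
      have he : u * conj t * conj v = u * conj v * conj t := by ring
      rw [← he]
      exact ⟨Qu_mul h1.1 h2c.1, Cr_mul h1.1 h2c.1 h1.2 h2c.2⟩
    · -- reflection ∘ reflection
      have h1 := (hrefl u hun f hff).mp hf
      have h2 := (hrefl v hvn g hgf).mp hg
      have hn2 : ‖v * conj t‖ = 1 := by rw [norm_mul, hvn, norm_conj', htn, one_mul]
      have h2c : Qu (conj (v * conj t)) ∧ Cr x (conj (v * conj t)) :=
        ⟨Qu_conj h2.1, Cr_conj hn2 h2.2⟩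
      refine (mem_OCs_rot x (u * conj v) (by rw [norm_mul, hun, norm_conj', hvn, one_mul]) (f ∘ g)
        (fun w => by
          rw [Function.comp_apply, hgf w, hff (v * conj w), map_mul, Complex.conj_conj]
          ring)).mpr ?_
      have he : u * conj t * conj (v * conj t) = u * conj v := by
        rw [map_mul, Complex.conj_conj]
        linear_combination u * conj v * htt
      rw [← he]
      exact ⟨Qu_mul h1.1 h2c.1, Cr_mul h1.1 h2c.1 h1.2 h2c.2⟩
  -- identity
  have hid : (id : ℂ → ℂ) ∈ OCs x := by
    refine (mem_OCs_rot x 1 (by simp) id (fun w => (one_mul w).symm)).mpr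
      ⟨⟨1, 1, one_ne_zero, by rw [toComplex_one, mul_one]⟩, ?_⟩
    rw [Cr, sub_self, mul_zero]
    exact (Msub 1).zero_mem
  -- subset of OCs 0
  have hsub : OCs x ⊆ OCs 0 := by
    intro f hf
    obtain ⟨u, hn, hc⟩ := classify hf.1
    rcases hc with hfr | hff
    · have h1 := (mem_OCs_rot x u hn f hfr).mp hf
      refine (mem_OCs_rot 0 u hn f hfr).mpr ⟨h1.1, ?_⟩
      rw [Cr, zero_mul]
      exact (Msub u).zero_mem
    · have h1 := (mem_OCs_refl x u hn f hff).mp hf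
      refine (mem_OCs_refl 0 u hn f hff).mpr ⟨h1.1, ?_⟩
      have : (0 : ℂ) - u * conj 0 = 0 := by rw [map_zero, mul_zero, sub_zero]
      rw [this]
      exact (Msub u).zero_mem
  -- inverses
  have hinv : ∀ f ∈ OCs x, ∀ g : ℂ → ℂ, g ∘ f = id → f ∘ g = id → g ∈ OCs x := by
    intro f hf g hgf hfg
    obtain ⟨u, hn, hc⟩ := classify hf.1
    have huu : u * conj u = 1 := unit_mul_conj hn
    rcases hc with hfr | hff
    · have hginv : ∀ w, g w = conj u * w := by
        intro w
        have h1 : f (g w) = w := congrFun hfg w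
        rw [hfr (g w)] at h1
        calc g w = conj u * (u * g w) := by linear_combination (-(g w)) * huu
        _ = conj u * w := by rw [h1]
      have h1 := (mem_OCs_rot x u hn f hfr).mp hf
      exact (mem_OCs_rot x (conj u) (by rw [norm_conj', hn]) g hginv).mpr
        ⟨Qu_conj h1.1, Cr_conj hn h1.2⟩
    · have hff2 : ∀ w, f (f w) = w := by
        intro w
        rw [hff w, hff (u * conj w), map_mul, Complex.conj_conj]
        linear_combination w * huu
      have hgf' : ∀ w, g w = f w := by
        intro w
        have h1 : g (f (f w)) = f w := congrFun hgf (f w)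
        rwa [hff2 w] at h1
      rw [funext hgf']
      exact hf
  refine ⟨⟨hsub, hid, hcomp, hinv⟩, ?_⟩
  -- the union decomposition
  have hTT : ∀ w : ℂ, t * conj (t * conj w) = w := by
    intro w
    rw [map_mul, Complex.conj_conj]
    linear_combination w * htt
  ext f
  constructor
  · intro hf
    obtain ⟨u, hn, hc⟩ := classify hf.1
    rcases hc with hfr | hff
    · exact Or.inl ⟨hf, u, hn, hfr⟩
    · refine Or.inr ⟨f ∘ (fun w => t * conj w), ⟨hcomp f hf _ hT, ?_⟩, ?_⟩
      · -- it is a rotation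
        refine ⟨u * conj t, by rw [norm_mul, hn, norm_conj', htn, one_mul], fun w => ?_⟩
        rw [Function.comp_apply, hff (t * conj w), map_mul, Complex.conj_conj]
        ring
      · -- composing with T again gives back f
        funext w
        show f (t * conj (t * conj w)) = f w
        rw [hTT w]
  · rintro (hf | ⟨S, hS, rfl⟩)
    · exact hf.1
    · exact hcomp S hS.1 _ hT
end

section
/- Let x ∈ ℂ and suppose that no reflection of the form w ↦ i^k·conj(w) with k ∈ {0,1,2,3} belongs to OC(x+Γ). Let z ∈ ℤ[i] with z and conj(z) coprime in ℤ[i], and let ε₁ ∈ {1, −1, i, −i}. If the reflection w ↦ ε₁·(z/conj(z))·conj(w) belongs to OC(x+Γ), then for every ε₂ ∈ {1, −1, i, −i} the rotation w ↦ ε₂·(z/conj(z))·w does not belong to SOC(x+Γ). -/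
open Pointwise Complex ComplexConjugate

lemma unit_exists {ε : ℂ} (hε : ε ∈ ({1, -1, I, -I} : Set ℂ)) :
    ∃ e : GaussianInt, (e : ℂ) = ε ∧ ε * conj ε = 1 ∧ ‖ε‖ = 1 := by
  simp only [Set.mem_insert_iff, Set.mem_singleton_iff] at hε
  rcases hε with rfl | rfl | rfl | rfl
  · exact ⟨1, by simp, by simp, by simp⟩
  · exact ⟨-1, by simp, by simp, by simp⟩
  · exact ⟨⟨0, 1⟩, by simp [GaussianInt.toComplex_def'], by simp [Complex.conj_I], by simp⟩
  · exact ⟨⟨0, -1⟩, by simp [GaussianInt.toComplex_def'], by simp [Complex.conj_I], by simp⟩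

lemma unit_pow {ε₁ ε₂ : ℂ} (h1 : ε₁ ∈ ({1, -1, I, -I} : Set ℂ))
    (h2 : ε₂ ∈ ({1, -1, I, -I} : Set ℂ)) :
    ∃ k : ℕ, k < 4 ∧ I ^ k = ε₁ * conj ε₂ := by
  simp only [Set.mem_insert_iff, Set.mem_singleton_iff] at h1 h2
  rcases h1 with rfl | rfl | rfl | rfl <;> rcases h2 with rfl | rfl | rfl | rfl
  · exact ⟨0, by norm_num⟩
  · exact ⟨2, by norm_num [pow_succ, Complex.I_mul_I, Complex.conj_I]⟩
  · exact ⟨3, by norm_num [pow_succ, Complex.I_mul_I, Complex.conj_I]⟩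
  · exact ⟨1, by norm_num [pow_succ, Complex.I_mul_I, Complex.conj_I]⟩
  · exact ⟨2, by norm_num [pow_succ, Complex.I_mul_I, Complex.conj_I]⟩
  · exact ⟨0, by norm_num [pow_succ, Complex.I_mul_I, Complex.conj_I]⟩
  · exact ⟨1, by norm_num [pow_succ, Complex.I_mul_I, Complex.conj_I]⟩
  · exact ⟨3, by norm_num [pow_succ, Complex.I_mul_I, Complex.conj_I]⟩
  · exact ⟨1, by norm_num [pow_succ, Complex.I_mul_I, Complex.conj_I]⟩
  · exact ⟨3, by norm_num [pow_succ, Complex.I_mul_I, Complex.conj_I]⟩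
  · exact ⟨0, by norm_num [pow_succ, Complex.I_mul_I, Complex.conj_I]⟩
  · exact ⟨2, by norm_num [pow_succ, Complex.I_mul_I, Complex.conj_I]⟩
  · exact ⟨3, by norm_num [pow_succ, Complex.I_mul_I, Complex.conj_I]⟩
  · exact ⟨1, by norm_num [pow_succ, Complex.I_mul_I, Complex.conj_I]⟩
  · exact ⟨2, by norm_num [pow_succ, Complex.I_mul_I, Complex.conj_I]⟩
  · exact ⟨0, by norm_num [pow_succ, Complex.I_mul_I, Complex.conj_I]⟩

/-- If `x - u * conj x` is a Gaussian integer (with `u` a Gaussian unit), then the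
reflection `w ↦ u * conj w` is a coincidence isometry of `x + Γ`. -/
lemma reflection_mem_OCs (x : ℂ) (ε₁ ε₂ : ℂ) (e₁ e₂ : GaussianInt)
    (he₁ : (e₁ : ℂ) = ε₁) (he₂ : (e₂ : ℂ) = ε₂)
    (hu₁ : ε₁ * conj ε₁ = 1) (hu₂ : ε₂ * conj ε₂ = 1)
    (hn₁ : ‖ε₁‖ = 1) (hn₂ : ‖ε₂‖ = 1)
    (D : GaussianInt) (hD : x - ε₁ * conj ε₂ * conj x = (D : ℂ)) :
    (fun w => ε₁ * conj ε₂ * conj w) ∈ OCs x := by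
  have huu : (ε₁ * conj ε₂) * (conj ε₁ * ε₂) = 1 := by
    linear_combination (ε₂ * conj ε₂) * hu₁ + hu₂
  have hsub : ∀ w ∈ shiftedZi x, ε₁ * conj ε₂ * conj w ∈ shiftedZi x := by
    intro w hw
    obtain ⟨g, rfl⟩ := mem_shiftedZi.1 hw
    refine mem_shiftedZi.2 ⟨-D + e₁ * star e₂ * star g, ?_⟩
    simp only [map_add, GaussianInt.toComplex_add, GaussianInt.toComplex_neg,
      GaussianInt.toComplex_mul, GaussianInt.toComplex_star, he₁, he₂]
    linear_combination -hD
  have himg : (fun w => ε₁ * conj ε₂ * conj w) '' shiftedZi x = shiftedZi x := by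
    apply Set.Subset.antisymm
    · rintro w ⟨v, hv, rfl⟩; exact hsub v hv
    · intro w hw
      refine ⟨ε₁ * conj ε₂ * conj w, hsub w hw, ?_⟩
      simp only [map_mul, conj_conj]
      linear_combination w * huu
  refine ⟨⟨Complex.conjLIE.trans (rotation ⟨ε₁ * conj ε₂,
      mem_sphere_zero_iff_norm.2 (by simp [norm_mul, hn₁, hn₂])⟩), ?_⟩,
    x, mem_shiftedZi.2 ⟨0, by simp⟩, Zi, le_rfl, ?_, ?_⟩
  · funext w; rfl
  · simp [AddSubgroup.relIndex_self]
  · rw [himg, Set.inter_self]; rfl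

theorem rotation_not_mem_SOC_of_reflection_mem_OC (x : ℂ)
    (hnoref : ∀ k : ℕ, k < 4 → (fun w => I ^ k * conj w) ∉ OCs x)
    (z : GaussianInt) (hcop : IsCoprime z (star z))
    (ε₁ : ℂ) (hε₁ : ε₁ ∈ ({1, -1, I, -I} : Set ℂ))
    (h : (fun w => ε₁ * ((z : ℂ) / conj (z : ℂ)) * conj w) ∈ OCs x) :
    ∀ ε₂ ∈ ({1, -1, I, -I} : Set ℂ),
      (fun w => ε₂ * ((z : ℂ) / conj (z : ℂ)) * w) ∉ SOCs x := by
  intro ε₂ hε₂ hsoc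
  obtain ⟨hs, -⟩ := hsoc
  obtain ⟨e₁, he₁, hu₁, hn₁⟩ := unit_exists hε₁
  obtain ⟨e₂, he₂, hu₂, hn₂⟩ := unit_exists hε₂
  have hz0 : z ≠ 0 := by rintro rfl; simp at hcop; exact not_isCoprime_zero_zero hcop
  have hzc : conj (z : ℂ) ≠ 0 := by
    simpa using (GaussianInt.toComplex_eq_zero (x := z)).not.2 hz0
  obtain ⟨-, c₁, hc₁, Λ₁, -, -, heq₁⟩ := h
  obtain ⟨-, c₂, hc₂, Λ₂, -, -, heq₂⟩ := hs
  have hmem₁ : c₁ ∈ shiftedZi x ∩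
      ((fun w => ε₁ * ((z : ℂ) / conj (z : ℂ)) * conj w) '' shiftedZi x) := by
    rw [heq₁]; exact ⟨0, Λ₁.zero_mem, add_zero c₁⟩
  have hmem₂ : c₂ ∈ shiftedZi x ∩
      ((fun w => ε₂ * ((z : ℂ) / conj (z : ℂ)) * w) '' shiftedZi x) := by
    rw [heq₂]; exact ⟨0, Λ₂.zero_mem, add_zero c₂⟩
  obtain ⟨g₁, hg₁⟩ := mem_shiftedZi.1 hmem₁.1
  obtain ⟨w₂, hw₂, hA⟩ := hmem₁.2
  obtain ⟨g₂, hg₂⟩ := mem_shiftedZi.1 hw₂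
  obtain ⟨g₃, hg₃⟩ := mem_shiftedZi.1 hmem₂.1
  obtain ⟨w₄, hw₄, hB⟩ := hmem₂.2
  obtain ⟨g₄, hg₄⟩ := mem_shiftedZi.1 hw₄
  dsimp only at hA hB
  rw [hg₂, hg₁, map_add] at hA
  rw [hg₄, hg₃] at hB
  have hq : conj (z : ℂ) * ((z : ℂ) / conj (z : ℂ)) = (z : ℂ) := by field_simp
  obtain ⟨G, hG⟩ : ∃ G : GaussianInt, (z : ℂ) * (ε₂ * x - ε₁ * conj x) = (G : ℂ) := by
    refine ⟨star z * g₃ - star z * g₁ - e₂ * z * g₄ + e₁ * z * star g₂, ?_⟩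
    simp only [GaussianInt.toComplex_add, GaussianInt.toComplex_sub,
      GaussianInt.toComplex_mul, GaussianInt.toComplex_star, he₁, he₂]
    linear_combination (conj (z : ℂ)) * hB - (conj (z : ℂ)) * hA -
      (ε₂ * x + ε₂ * (g₄ : ℂ) - ε₁ * conj x - ε₁ * conj (g₂ : ℂ)) * hq
  have hGc : conj (z : ℂ) * (conj ε₂ * conj x - conj ε₁ * x) = conj (G : ℂ) := by
    have := congrArg (starRingEnd ℂ) hG
    simp only [map_mul, map_sub, conj_conj] at this
    linear_combination this
  have key2 : conj (z : ℂ) * (ε₂ * x - ε₁ * conj x) = -(ε₁ * (ε₂ * conj (G : ℂ))) := by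
    linear_combination (-(ε₁ * ε₂)) * hGc - (conj (z : ℂ) * x * ε₂) * hu₁ +
      (conj (z : ℂ) * conj x * ε₁) * hu₂
  obtain ⟨a, b, hab⟩ := hcop
  have habC : (a : ℂ) * (z : ℂ) + (b : ℂ) * conj (z : ℂ) = 1 := by
    have := congrArg GaussianInt.toComplex hab
    simpa [GaussianInt.toComplex_star] using this
  obtain ⟨H, hH⟩ : ∃ H : GaussianInt, ε₂ * x - ε₁ * conj x = (H : ℂ) := by
    refine ⟨a * G + b * (-(e₁ * (e₂ * star G))), ?_⟩
    simp only [GaussianInt.toComplex_add, GaussianInt.toComplex_neg,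
      GaussianInt.toComplex_mul, GaussianInt.toComplex_star, he₁, he₂]
    linear_combination (a : ℂ) * hG + (b : ℂ) * key2 - (ε₂ * x - ε₁ * conj x) * habC
  have hD : x - ε₁ * conj ε₂ * conj x = ((star e₂ * H : GaussianInt) : ℂ) := by
    simp only [GaussianInt.toComplex_mul, GaussianInt.toComplex_star, he₂]
    linear_combination (conj ε₂) * hH - x * hu₂
  obtain ⟨k, hk4, hkI⟩ := unit_pow hε₁ hε₂
  refine hnoref k hk4 ?_
  rw [hkI]
  exact reflection_mem_OCs x ε₁ ε₂ e₁ e₂ he₁ he₂ hu₁ hu₂ hn₁ hn₂ _ hD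
end

section
/- Let x = a + b·i ∈ ℂ with a irrational and b rational. If 2b ∈ ℤ, then OC(x+Γ) = {id, T_r}, where T_r is complex conjugation; otherwise OC(x+Γ) = {id}. -/
open Pointwise Complex ComplexConjugate

/-! ### Auxiliary lemmas -/

lemma mem_Zi_iff_s10 {z : ℂ} : z ∈ Zi ↔ ∃ m n : ℤ, z = (m : ℂ) + (n : ℂ) * I := by
  constructor
  · rintro ⟨g, rfl⟩
    exact ⟨g.re, g.im, GaussianInt.toComplex_def g⟩
  · rintro ⟨m, n, rfl⟩
    exact ⟨⟨m, n⟩, (GaussianInt.toComplex_def' m n)⟩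

lemma one_mem_Zi : (1 : ℂ) ∈ Zi := mem_Zi_iff_s10.mpr ⟨1, 0, by simp⟩
lemma I_mem_Zi : (I : ℂ) ∈ Zi := mem_Zi_iff_s10.mpr ⟨0, 1, by simp⟩

lemma conj_mem_Zi {z : ℂ} (hz : z ∈ Zi) : (starRingEnd ℂ) z ∈ Zi := by
  obtain ⟨m, n, rfl⟩ := mem_Zi_iff_s10.mp hz
  refine mem_Zi_iff_s10.mpr ⟨m, -n, ?_⟩
  push_cast
  simp [Complex.ext_iff]

lemma mem_shiftedZi_s10 {x z : ℂ} : z ∈ shiftedZi x ↔ z - x ∈ Zi := by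
  constructor
  · rintro ⟨y, hy, rfl⟩
    simpa using hy
  · intro h
    exact ⟨z - x, h, by simp⟩

lemma relindex_mul_mem {Λ : AddSubgroup ℂ} {z : ℂ} (hz : z ∈ Zi) :
    (Λ.relIndex Zi : ℂ) * z ∈ Λ := by
  have h := AddSubgroup.nsmul_index_mem (Λ.addSubgroupOf Zi) (⟨z, hz⟩ : Zi)
  rw [AddSubgroup.mem_addSubgroupOf] at h
  simpa [AddSubgroup.relIndex, nsmul_eq_mul] using h

/-- The subfield `ℚ(i)` of `ℂ`. -/
noncomputable def KQ : Subfield ℂ where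
  carrier := {z | ∃ q r : ℚ, z = (q : ℂ) + (r : ℂ) * I}
  zero_mem' := ⟨0, 0, by simp⟩
  one_mem' := ⟨1, 0, by simp⟩
  add_mem' := by
    rintro z w ⟨q, r, rfl⟩ ⟨q', r', rfl⟩
    exact ⟨q + q', r + r', by push_cast; ring⟩
  neg_mem' := by
    rintro z ⟨q, r, rfl⟩
    exact ⟨-q, -r, by push_cast; ring⟩
  mul_mem' := by
    rintro z w ⟨q, r, rfl⟩ ⟨q', r', rfl⟩
    exact ⟨q * q' - r * r', q * r' + r * q',
      by push_cast; linear_combination (r * r' : ℂ) * Complex.I_sq⟩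
  inv_mem' := by
    rintro z ⟨q, r, rfl⟩
    by_cases h : (q : ℂ) + (r : ℂ) * I = 0
    · rw [h, inv_zero]; exact ⟨0, 0, by simp⟩
    · have hqr : ¬(q = 0 ∧ r = 0) := by
        rintro ⟨rfl, rfl⟩; simp at h
      have hd : (q ^ 2 + r ^ 2 : ℚ) ≠ 0 := by
        intro hd
        exact hqr ⟨by nlinarith [sq_nonneg q, sq_nonneg r], by nlinarith [sq_nonneg q, sq_nonneg r]⟩
      refine ⟨q / (q ^ 2 + r ^ 2), -r / (q ^ 2 + r ^ 2), ?_⟩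
      apply inv_eq_of_mul_eq_one_right
      have hdC : ((q : ℂ) ^ 2 + (r : ℂ) ^ 2) ≠ 0 := by
        have : ((q : ℂ) ^ 2 + (r : ℂ) ^ 2) = ((q ^ 2 + r ^ 2 : ℚ) : ℂ) := by push_cast; ring
        rw [this]
        exact_mod_cast fun hc => hd (by exact_mod_cast hc)
      push_cast
      field_simp
      linear_combination (-(r:ℂ)^2) * Complex.I_sq

lemma I_mem_KQ : (I : ℂ) ∈ KQ := ⟨0, 1, by simp⟩

lemma Zi_subset_KQ {z : ℂ} (hz : z ∈ Zi) : z ∈ KQ := by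
  obtain ⟨m, n, rfl⟩ := mem_Zi_iff_s10.mp hz
  exact ⟨m, n, by push_cast; ring⟩

lemma nat_mem_KQ (n : ℕ) : ((n : ℂ)) ∈ KQ := ⟨n, 0, by push_cast; ring⟩

lemma re_rat_of_mem_KQ {z : ℂ} (hz : z ∈ KQ) : ∃ q : ℚ, (q : ℝ) = z.re := by
  obtain ⟨q, r, rfl⟩ := hz
  exact ⟨q, by simp⟩

lemma ofReal_not_mem_KQ {a : ℝ} (ha : Irrational a) : (a : ℂ) ∉ KQ := by
  intro h
  obtain ⟨q, hq⟩ := re_rat_of_mem_KQ h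
  exact ha ⟨q, by simpa using hq⟩

lemma x_not_mem_KQ {a b : ℝ} (ha : Irrational a) : ((a : ℂ) + (b : ℂ) * I) ∉ KQ := by
  intro h
  obtain ⟨q, hq⟩ := re_rat_of_mem_KQ h
  simp at hq
  exact ha ⟨q, hq⟩

lemma id_mem_OCs (x : ℂ) : id ∈ OCs x := by
  refine ⟨⟨LinearIsometryEquiv.refl ℝ ℂ, rfl⟩, x, mem_shiftedZi_s10.mpr (by simp [Zi.zero_mem]),
    Zi, le_rfl, ?_, ?_⟩
  · rw [AddSubgroup.relIndex_self]; exact one_ne_zero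
  · rw [Set.image_id, Set.inter_self]; rfl

lemma conj_image_shifted {x : ℂ} (hx : x - (starRingEnd ℂ) x ∈ Zi) :
    (fun w => (starRingEnd ℂ) w) '' shiftedZi x = shiftedZi x := by
  have key : ∀ w : ℂ, w ∈ shiftedZi x → (starRingEnd ℂ) w ∈ shiftedZi x := by
    intro w hw
    rw [mem_shiftedZi_s10] at hw ⊢
    have h1 : (starRingEnd ℂ) (w - x) ∈ Zi := conj_mem_Zi hw
    have h2 : (starRingEnd ℂ) w - x = (starRingEnd ℂ) (w - x) - (x - (starRingEnd ℂ) x) := by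
      rw [map_sub]; ring
    rw [h2]
    exact Zi.sub_mem h1 hx
  ext z
  constructor
  · rintro ⟨w, hw, rfl⟩
    exact key w hw
  · intro hz
    exact ⟨(starRingEnd ℂ) z, key z hz, by simp⟩

lemma conj_mem_OCs {x : ℂ} (hx : x - (starRingEnd ℂ) x ∈ Zi) :
    (fun w => (starRingEnd ℂ) w) ∈ OCs x := by
  refine ⟨⟨conjLIE, funext fun w => Complex.conjLIE_apply w⟩, x,
    mem_shiftedZi_s10.mpr (by simp [Zi.zero_mem]), Zi, le_rfl, ?_, ?_⟩
  · rw [AddSubgroup.relIndex_self]; exact one_ne_zero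
  · rw [conj_image_shifted hx, Set.inter_self]; rfl

lemma mem_vadd_coset {c z : ℂ} {Λ : AddSubgroup ℂ} (h : z - c ∈ Λ) : z ∈ c +ᵥ (Λ : Set ℂ) :=
  ⟨z - c, h, by simp⟩

lemma mem_OCs_elim {a b : ℝ} (ha : Irrational a) (hb : ∃ r : ℚ, (r : ℝ) = b)
    {f : ℂ → ℂ} (hf : f ∈ OCs ((a : ℂ) + (b : ℂ) * I)) :
    f = id ∨ (f = (fun w => (starRingEnd ℂ) w) ∧ ∃ n : ℤ, (n : ℝ) = 2 * b) := by
  obtain ⟨⟨R, hR⟩, c, hc, Λ, hle, hrel, hset⟩ := hf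
  set x : ℂ := (a : ℂ) + (b : ℂ) * I with hxdef
  obtain ⟨uc, hrot⟩ := linear_isometry_complex R
  set u : ℂ := (uc : ℂ) with hudef
  set n : ℕ := Λ.relIndex Zi with hndef
  have hn0 : (n : ℂ) ≠ 0 := Nat.cast_ne_zero.mpr hrel
  have h1 : (n : ℂ) ∈ Λ := by simpa using relindex_mul_mem (Λ := Λ) one_mem_Zi
  have hI : (n : ℂ) * I ∈ Λ := relindex_mul_mem I_mem_Zi
  have hcmem : c ∈ shiftedZi x ∩ (f '' shiftedZi x) := by
    rw [hset]; exact mem_vadd_coset (by simpa using Λ.zero_mem)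
  have hc1 : c + n ∈ shiftedZi x ∩ (f '' shiftedZi x) := by
    rw [hset]; exact mem_vadd_coset (by simpa using h1)
  have hγ : c - x ∈ Zi := mem_shiftedZi_s10.mp hc
  obtain ⟨y0, hy0, he0⟩ := hcmem.2
  obtain ⟨y1, hy1, he1⟩ := hc1.2
  rw [mem_shiftedZi_s10] at hy0 hy1
  have hconjx : (starRingEnd ℂ) x = (a : ℂ) - (b : ℂ) * I := by
    rw [hxdef, map_add, map_mul, Complex.conj_ofReal, Complex.conj_ofReal, Complex.conj_I]
    ring
  rcases hrot with hrot | hrot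
  · -- rotation case : f w = u * w
    have hfu : ∀ w, f w = u * w := by intro w; rw [← hR, hrot]; rfl
    rw [hfu y0] at he0
    rw [hfu y1] at he1
    have hδmem : y1 - y0 ∈ Zi := by
      have h : y1 - y0 = (y1 - x) - (y0 - x) := by ring
      rw [h]; exact Zi.sub_mem hy1 hy0
    have hδ : u * (y1 - y0) = (n : ℂ) := by linear_combination he1 - he0
    have hδne : y1 - y0 ≠ 0 := by
      intro h; rw [h, mul_zero] at hδ; exact hn0 hδ.symm
    have huK : u ∈ KQ := by
      have h : u = (n : ℂ) / (y1 - y0) := by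
        field_simp
        linear_combination hδ
      rw [h]; exact KQ.div_mem (nat_mem_KQ n) (Zi_subset_KQ hδmem)
    have hxK' : (1 - u) * x ∈ KQ := by
      have h : (1 - u) * x = u * (y0 - x) - (c - x) := by linear_combination -he0
      rw [h]
      exact KQ.sub_mem (KQ.mul_mem huK (Zi_subset_KQ hy0)) (Zi_subset_KQ hγ)
    by_cases hu1 : u = 1
    · left
      funext w
      rw [hfu w, hu1, one_mul]
      rfl
    · exfalso
      have h10 : (1 : ℂ) - u ≠ 0 := sub_ne_zero.mpr (Ne.symm hu1)
      have hxK : x ∈ KQ := by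
        have h : x = ((1 - u) * x) / (1 - u) := by field_simp
        rw [h]; exact KQ.div_mem hxK' (KQ.sub_mem KQ.one_mem huK)
      exact x_not_mem_KQ ha hxK
  · -- reflection case : f w = u * conj w
    have hfu : ∀ w, f w = u * (starRingEnd ℂ) w := by intro w; rw [← hR, hrot]; rfl
    rw [hfu y0] at he0
    rw [hfu y1] at he1
    have hδmem : (starRingEnd ℂ) y1 - (starRingEnd ℂ) y0 ∈ Zi := by
      have h : (starRingEnd ℂ) y1 - (starRingEnd ℂ) y0 = (starRingEnd ℂ) ((y1 - x) - (y0 - x)) := by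
        rw [map_sub, map_sub, map_sub]; ring
      rw [h]; exact conj_mem_Zi (Zi.sub_mem hy1 hy0)
    have hδ : u * ((starRingEnd ℂ) y1 - (starRingEnd ℂ) y0) = (n : ℂ) := by
      linear_combination he1 - he0
    have hδne : (starRingEnd ℂ) y1 - (starRingEnd ℂ) y0 ≠ 0 := by
      intro h; rw [h, mul_zero] at hδ; exact hn0 hδ.symm
    have huK : u ∈ KQ := by
      have h : u = (n : ℂ) / ((starRingEnd ℂ) y1 - (starRingEnd ℂ) y0) := by
        field_simp
        linear_combination hδ
      rw [h]; exact KQ.div_mem (nat_mem_KQ n) (Zi_subset_KQ hδmem)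
    have hxmu : x - u * (starRingEnd ℂ) x ∈ KQ := by
      have h : x - u * (starRingEnd ℂ) x = u * (starRingEnd ℂ) (y0 - x) - (c - x) := by
        rw [map_sub]; linear_combination -he0
      rw [h]
      exact KQ.sub_mem (KQ.mul_mem huK (Zi_subset_KQ (conj_mem_Zi hy0))) (Zi_subset_KQ hγ)
    have bK : (b : ℂ) ∈ KQ := by
      obtain ⟨rb, hrb⟩ := hb
      exact ⟨rb, 0, by rw [← hrb]; push_cast; ring⟩
    have haK : (a : ℂ) * (1 - u) ∈ KQ := by
      have h : (a : ℂ) * (1 - u) = (x - u * (starRingEnd ℂ) x) - (b : ℂ) * I * (1 + u) := by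
        rw [hconjx, hxdef]; ring
      rw [h]
      exact KQ.sub_mem hxmu (KQ.mul_mem (KQ.mul_mem bK I_mem_KQ) (KQ.add_mem KQ.one_mem huK))
    by_cases hu1 : u = 1
    · right
      constructor
      · funext w
        rw [hfu w, hu1, one_mul]
      · rw [hu1, one_mul] at he0
        have hcc : c - (starRingEnd ℂ) x ∈ Zi := by
          have h : c - (starRingEnd ℂ) x = (starRingEnd ℂ) (y0 - x) := by
            rw [map_sub, he0]
          rw [h]; exact conj_mem_Zi hy0
        have hdiff : x - (starRingEnd ℂ) x ∈ Zi := by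
          have h : x - (starRingEnd ℂ) x = (c - (starRingEnd ℂ) x) - (c - x) := by ring
          rw [h]; exact Zi.sub_mem hcc hγ
        have hxc : x - (starRingEnd ℂ) x = ((2 * b : ℝ) : ℂ) * I := by
          rw [hxdef, hconjx]; push_cast; ring
        rw [hxc] at hdiff
        obtain ⟨m, k, hmk⟩ := mem_Zi_iff_s10.mp hdiff
        refine ⟨k, ?_⟩
        have him := congrArg Complex.im hmk
        simp at him
        linarith
    · exfalso
      have h10 : (1 : ℂ) - u ≠ 0 := sub_ne_zero.mpr (Ne.symm hu1)
      have haK' : (a : ℂ) ∈ KQ := by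
        have h : (a : ℂ) = ((a : ℂ) * (1 - u)) / (1 - u) := by field_simp
        rw [h]; exact KQ.div_mem haK (KQ.sub_mem KQ.one_mem huK)
      exact ofReal_not_mem_KQ ha haK'

theorem OC_of_irrational_re_rational_im (a b : ℝ) (ha : Irrational a)
    (hb : ∃ r : ℚ, (r : ℝ) = b) :
    ((∃ n : ℤ, (n : ℝ) = 2 * b) →
        OCs (a + b * I) = ({id, fun w => conj w} : Set (ℂ → ℂ))) ∧
      (¬(∃ n : ℤ, (n : ℝ) = 2 * b) → OCs (a + b * I) = ({id} : Set (ℂ → ℂ))) := by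
  constructor
  · intro h2b
    ext f
    simp only [Set.mem_insert_iff, Set.mem_singleton_iff]
    constructor
    · intro hf
      rcases mem_OCs_elim ha hb hf with h | ⟨h, _⟩
      · exact Or.inl h
      · exact Or.inr h
    · rintro (rfl | rfl)
      · exact id_mem_OCs _
      · apply conj_mem_OCs
        obtain ⟨nn, hnn⟩ := h2b
        have hconjx : (starRingEnd ℂ) ((a : ℂ) + (b : ℂ) * I) = (a : ℂ) - (b : ℂ) * I := by
          rw [map_add, map_mul, Complex.conj_ofReal, Complex.conj_ofReal, Complex.conj_I]
          ring
        rw [hconjx]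
        refine mem_Zi_iff_s10.mpr ⟨0, nn, ?_⟩
        have h : ((nn : ℤ) : ℂ) = ((2 * b : ℝ) : ℂ) := by
          rw [← hnn]; push_cast; ring
        rw [h]; push_cast; ring
  · intro h2b
    ext f
    simp only [Set.mem_singleton_iff]
    constructor
    · intro hf
      rcases mem_OCs_elim ha hb hf with h | ⟨_, hn⟩
      · exact h
      · exact absurd hn h2b
    · rintro rfl
      exact id_mem_OCs _
end
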